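/- arXiv:2604.18104 — 5 statements merged into one kernel-verified Lean document; each statement's English description precedes it below -/
import Mathlib

section
/- Let m ≥ 1 and let G be a group with a finite-index normal subgroup A isomorphic to ℤ^m. Suppose there is a group homomorphism sgn : G → {1,−1} (the units of ℤ) such that g⁻¹ x g = x^{sgn g} for all g ∈ G and x ∈ A (where x^{1} = x and x^{−1} = x⁻¹). Then for every finite generating set Σ of G, α_{G,Σ} ∼ (n ↦ n), i.e. the automorphic growth of G is linear. -/
/-- The ball of radius `n` in a group with respect to a generating set `S`:
elements expressible as a product of at most `n` elements of `S ∪ S⁻¹`. -/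
def wordBall {G : Type*} [Group G] (S : Set G) (n : ℕ) : Set G :=
  {g | ∃ l : List G, (∀ x ∈ l, x ∈ S ∨ x⁻¹ ∈ S) ∧ l.length ≤ n ∧ l.prod = g}

/-- The automorphic growth function: the number of `Aut G`-orbits of `G`
containing an element of word length at most `n` with respect to `S`. -/
noncomputable def autGrowth {G : Type*} [Group G] (S : Set G) (n : ℕ) : ℕ :=
  Set.ncard (Quotient.mk (MulAction.orbitRel (MulAut G) G) '' wordBall S n)

def GrowthLe (f g : ℕ → ℕ) : Prop :=
  ∃ lam : ℕ, 0 < lam ∧ ∀ n, f n ≤ lam * g (lam * n + lam) + lam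

def GrowthEquiv (f g : ℕ → ℕ) : Prop := GrowthLe f g ∧ GrowthLe g f

set_option linter.unusedSectionVars false
set_option maxHeartbeats 1000000

namespace AGL



variable {G : Type*} [Group G]

theorem one_mem_wordBall (S : Set G) (n : ℕ) : (1 : G) ∈ wordBall S n :=
  ⟨[], by simp, by simp, by simp⟩

theorem wordBall_mono (S : Set G) {n n' : ℕ} (h : n ≤ n') : wordBall S n ⊆ wordBall S n' := by
  rintro g ⟨l, h1, h2, h3⟩; exact ⟨l, h1, h2.trans h, h3⟩

theorem mul_mem_wordBall {S : Set G} {g h : G} {a b : ℕ}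
    (hg : g ∈ wordBall S a) (hh : h ∈ wordBall S b) : g * h ∈ wordBall S (a + b) := by
  obtain ⟨l, l1, l2, l3⟩ := hg
  obtain ⟨t, t1, t2, t3⟩ := hh
  refine ⟨l ++ t, ?_, ?_, by simp [l3, t3]⟩
  · intro x hx; rcases List.mem_append.1 hx with h | h
    · exact l1 x h
    · exact t1 x h
  · simpa using Nat.add_le_add l2 t2

theorem inv_mem_wordBall {S : Set G} {g : G} {a : ℕ}
    (hg : g ∈ wordBall S a) : g⁻¹ ∈ wordBall S a := by
  obtain ⟨l, l1, l2, l3⟩ := hg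
  refine ⟨(l.map (fun x => x⁻¹)).reverse, ?_, by simpa using l2, ?_⟩
  · intro x hx
    simp only [List.mem_reverse, List.mem_map] at hx
    obtain ⟨y, hy, rfl⟩ := hx
    rcases l1 y hy with h | h
    · right; simpa using h
    · left; exact h
  · rw [← List.prod_inv_reverse, l3]

theorem pow_mem_wordBall {S : Set G} {g : G} {a : ℕ} (hg : g ∈ wordBall S a) (j : ℕ) :
    g ^ j ∈ wordBall S (j * a) := by
  induction j with
  | zero => simpa using one_mem_wordBall S 0
  | succ k ih =>
      have := mul_mem_wordBall ih hg
      rw [← pow_succ] at this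
      simpa [Nat.succ_mul] using this

theorem exists_wordBall_of_closure {S : Set G} (hS : Subgroup.closure S = ⊤) (g : G) :
    ∃ n, g ∈ wordBall S n := by
  have hg : g ∈ Subgroup.closure S := by rw [hS]; trivial
  induction hg using Subgroup.closure_induction with
  | mem x hx => exact ⟨1, [x], by simp [hx], by simp, by simp⟩
  | one => exact ⟨0, one_mem_wordBall S 0⟩
  | mul x y hx hy ihx ihy =>
      obtain ⟨a, ha⟩ := ihx; obtain ⟨b, hb⟩ := ihy
      exact ⟨a + b, mul_mem_wordBall ha hb⟩
  | inv x hx ihx =>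
      obtain ⟨a, ha⟩ := ihx
      exact ⟨a, inv_mem_wordBall ha⟩

theorem wordBall_finite (S : Finset G) (n : ℕ) : (wordBall (S : Set G) n).Finite := by
  classical
  have : wordBall (S : Set G) n ⊆
      (fun l : List G => l.prod) '' {l : List G | (∀ x ∈ l, x ∈ (S : Set G) ∪ (S : Set G)⁻¹) ∧ l.length ≤ n} := by
    rintro g ⟨l, l1, l2, l3⟩
    refine ⟨l, ⟨?_, l2⟩, l3⟩
    intro x hx; rcases l1 x hx with h | h
    · exact Set.mem_union_left _ h
    · exact Set.mem_union_right _ (by simpa using h)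
  refine Set.Finite.subset (Set.Finite.image _ ?_) this
  have hfin : ((S : Set G) ∪ (S : Set G)⁻¹).Finite :=
    (S.finite_toSet).union (S.finite_toSet.inv)
  haveI : Finite ((S : Set G) ∪ (S : Set G)⁻¹ : Set G) := hfin
  have hsub : {l : List G | (∀ x ∈ l, x ∈ (S : Set G) ∪ (S : Set G)⁻¹) ∧ l.length ≤ n} ⊆
      (fun l : List ((S : Set G) ∪ (S : Set G)⁻¹ : Set G) => l.map Subtype.val) ''
        {l | l.length ≤ n} := by
    rintro l ⟨h1, h2⟩
    refine ⟨l.pmap (fun x hx => ⟨x, hx⟩) h1, by simpa using h2, ?_⟩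
    simp [List.map_pmap]
  exact Set.Finite.subset (Set.Finite.image _ (List.finite_length_le _ n)) hsub


theorem quotient_orbit_eq_iff {G : Type*} [Group G] (x y : G) :
    Quotient.mk (MulAction.orbitRel (MulAut G) G) x = Quotient.mk (MulAction.orbitRel (MulAut G) G) y
      ↔ ∃ φ : MulAut G, φ y = x := by
  rw [Quotient.eq]
  change (MulAction.orbitRel (MulAut G) G) x y ↔ _
  rw [MulAction.orbitRel_apply]
  constructor
  · rintro ⟨φ, rfl⟩; exact ⟨φ, rfl⟩
  · rintro ⟨φ, rfl⟩; exact ⟨φ, rfl⟩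

theorem ncard_image_quotient_le {α β : Type*} (s : Setoid α) (Bs : Set α) (f : β → α) [Finite β]
    (h : ∀ g ∈ Bs, ∃ b : β, Quotient.mk s (f b) = Quotient.mk s g) :
    (Quotient.mk s '' Bs).ncard ≤ Nat.card β := by
  have hsub : Quotient.mk s '' Bs ⊆ (fun b => Quotient.mk s (f b)) '' Set.univ := by
    rintro q ⟨g, hg, rfl⟩
    obtain ⟨b, hb⟩ := h g hg
    exact ⟨b, trivial, hb⟩
  calc (Quotient.mk s '' Bs).ncard ≤ ((fun b => Quotient.mk s (f b)) '' Set.univ).ncard :=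
        Set.ncard_le_ncard hsub (Set.finite_univ.image _)
    _ ≤ (Set.univ : Set β).ncard := Set.ncard_image_le Set.finite_univ
    _ = Nat.card β := Set.ncard_univ β

theorem le_ncard_image_quotient {α ι : Type*} (s : Setoid α) (Bs : Set α) (hB : Bs.Finite)
    (t : Finset ι) (f : ι → α) (hf : ∀ i ∈ t, f i ∈ Bs)
    (hinj : Set.InjOn (fun i => Quotient.mk s (f i)) t) :
    t.card ≤ (Quotient.mk s '' Bs).ncard := by
  classical
  have hfin : (Quotient.mk s '' Bs).Finite := hB.image _
  rw [Set.ncard_eq_toFinset_card _ hfin]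
  refine Finset.card_le_card_of_injOn (fun i => Quotient.mk s (f i)) ?_ hinj
  intro i hi
  simp only [Set.Finite.mem_toFinset]
  exact (Set.Finite.mem_toFinset hfin).2 ⟨f i, hf i hi, rfl⟩



def norm1 {m : ℕ} (v : Fin m → ℤ) : ℕ := ∑ i, (v i).natAbs

theorem norm1_add {m : ℕ} (v w : Fin m → ℤ) : norm1 (v + w) ≤ norm1 v + norm1 w := by
  rw [norm1, norm1, norm1, ← Finset.sum_add_distrib]
  apply Finset.sum_le_sum
  intro i _
  exact Int.natAbs_add_le _ _

theorem norm1_unit_smul {m : ℕ} (ε : ℤˣ) (v : Fin m → ℤ) : norm1 ((ε : ℤ) • v) = norm1 v := by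
  rw [norm1, norm1]
  apply Finset.sum_congr rfl
  intro i _
  simp only [Pi.smul_apply, smul_eq_mul, Int.natAbs_mul]
  rcases Int.units_eq_one_or ε with h | h <;> simp [h]

theorem norm1_nsmul {m : ℕ} (c : ℕ) (v : Fin m → ℤ) : norm1 ((c : ℤ) • v) = c * norm1 v := by
  rw [norm1, norm1, Finset.mul_sum]
  apply Finset.sum_congr rfl
  intro i _
  simp [Int.natAbs_mul]

theorem std_mulVec {m : ℕ} (j i : Fin m) (c : ℤ) (w : Fin m → ℤ) :
    (Matrix.single j i c).mulVec w = Pi.single j (c * w i) := by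
  funext l
  rw [Matrix.mulVec, dotProduct]
  by_cases h : l = j
  · subst h
    rw [Pi.single_eq_same]
    rw [Finset.sum_eq_single i]
    · simp [Matrix.single]
    · intro t _ ht; simp [Matrix.single, Ne.symm ht]
    · simp
  · rw [Pi.single_eq_of_ne h]
    apply Finset.sum_eq_zero
    intro t _
    simp [Matrix.single, Ne.symm h]

noncomputable def elemUnit {m : ℕ} (j i : Fin m) (hij : i ≠ j) (c : ℤ) :
    (Matrix (Fin m) (Fin m) ℤ)ˣ where
  val := 1 + Matrix.single j i c
  inv := 1 - Matrix.single j i c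
  val_inv := by
    have hEE : Matrix.single j i c * Matrix.single j i c = 0 :=
      Matrix.single_mul_single_of_ne (c := c) j i j hij c
    calc (1 + Matrix.single j i c) * (1 - Matrix.single j i c)
        = 1 - Matrix.single j i c * Matrix.single j i c := by noncomm_ring
      _ = 1 := by rw [hEE, sub_zero]
  inv_val := by
    have hEE : Matrix.single j i c * Matrix.single j i c = 0 :=
      Matrix.single_mul_single_of_ne (c := c) j i j hij c
    calc (1 - Matrix.single j i c) * (1 + Matrix.single j i c)
        = 1 - Matrix.single j i c * Matrix.single j i c := by noncomm_ring
      _ = 1 := by rw [hEE, sub_zero]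

noncomputable def diagUnit {m : ℕ} (δ : Fin m → ℤ) (hδ : ∀ i, δ i * δ i = 1) :
    (Matrix (Fin m) (Fin m) ℤ)ˣ where
  val := Matrix.diagonal δ
  inv := Matrix.diagonal δ
  val_inv := by
    rw [Matrix.diagonal_mul_diagonal]
    rw [show (fun i => δ i * δ i) = fun _ => (1:ℤ) from funext hδ]
    exact Matrix.diagonal_one
  inv_val := by
    rw [Matrix.diagonal_mul_diagonal]
    rw [show (fun i => δ i * δ i) = fun _ => (1:ℤ) from funext hδ]
    exact Matrix.diagonal_one

theorem lemA : ∀ (n : ℕ) {m : ℕ} (_ : 0 < m) (u : Fin m → ℤ), norm1 u = n →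
    ∃ (g : (Matrix (Fin m) (Fin m) ℤ)ˣ) (k : Fin m) (v : ℤ),
      v.natAbs ≤ norm1 u ∧ (g : Matrix (Fin m) (Fin m) ℤ).mulVec (Pi.single k v) = u := by
  intro n
  induction n using Nat.strong_induction_on with
  | _ n IH =>
    intro m hm0 u hn
    by_cases h2 : ∃ p : Fin m × Fin m, p.1 ≠ p.2 ∧ u p.1 ≠ 0 ∧ u p.2 ≠ 0 ∧
        (u p.1).natAbs ≤ (u p.2).natAbs
    · obtain ⟨⟨i, j⟩, hij, hui, huj, hle⟩ := h2
      set r := u j % u i with hr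
      set qd := u j / u i with hq
      have hr0 : 0 ≤ r := Int.emod_nonneg _ hui
      have hrlt : r < |u i| := by
          have := Int.emod_lt (u j) hui; rw [Int.abs_eq_natAbs]; exact this
      have hrabs : r.natAbs < (u i).natAbs := by
        have h1 : (r.natAbs : ℤ) = r := Int.natAbs_of_nonneg hr0
        have h2 : ((u i).natAbs : ℤ) = |u i| := (Int.abs_eq_natAbs _).symm
        have : (r.natAbs : ℤ) < ((u i).natAbs : ℤ) := by rw [h1, h2]; exact hrlt
        exact_mod_cast this
      set u' := Function.update u j r with hu'
      have hui' : u' i = u i := Function.update_of_ne (by exact fun h => hij h) r u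
      have hkey : ((elemUnit j i (fun h => hij h) qd : (Matrix (Fin m) (Fin m) ℤ)ˣ) :
          Matrix (Fin m) (Fin m) ℤ).mulVec u' = u := by
        show (1 + Matrix.single j i qd).mulVec u' = u
        rw [Matrix.add_mulVec, Matrix.one_mulVec, std_mulVec, hui']
        funext l
        by_cases h : l = j
        · rw [h]
          simp only [Pi.add_apply, Pi.single_eq_same]
          rw [hu', Function.update_self, hr, hq]
          exact Int.emod_add_ediv_mul (u j) (u i)
        · simp only [Pi.add_apply, Pi.single_eq_of_ne h, add_zero]
          rw [hu', Function.update_of_ne h]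
      have hnorm : norm1 u' < norm1 u := by
        rw [norm1, norm1]
        have hj : j ∈ Finset.univ := Finset.mem_univ j
        rw [← Finset.add_sum_erase _ _ hj, ← Finset.add_sum_erase _ _ hj]
        have hsame : ∑ x ∈ Finset.univ.erase j, (u' x).natAbs
            = ∑ x ∈ Finset.univ.erase j, (u x).natAbs := by
          apply Finset.sum_congr rfl
          intro x hx
          rw [hu', Function.update_of_ne (Finset.ne_of_mem_erase hx)]
        rw [hsame]
        apply Nat.add_lt_add_right
        have : u' j = r := Function.update_self j r u
        rw [this]
        exact lt_of_lt_of_le hrabs hle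
      obtain ⟨g, k, v, hv, hg⟩ := IH (norm1 u') (by omega) hm0 u' rfl
      refine ⟨elemUnit j i (fun h => hij h) qd * g, k, v, by omega, ?_⟩
      rw [Units.val_mul, ← Matrix.mulVec_mulVec, hg, hkey]
    · push_neg at h2
      by_cases hz : ∀ l, u l = 0
      · refine ⟨1, ⟨0, hm0⟩, 0, by simp, ?_⟩
        rw [Pi.single_zero, Units.val_one, Matrix.one_mulVec]
        funext l
        exact (hz l).symm
      · push_neg at hz
        obtain ⟨k, hk⟩ := hz
        have hall : ∀ l, l ≠ k → u l = 0 := by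
          intro l hl
          by_contra hul
          have ha := h2 (k, l) (fun hh => hl hh.symm) hk hul
          have hb := h2 (l, k) hl hul hk
          simp only at ha hb
          omega
        have hu : u = Pi.single k (u k) := by
          funext l
          by_cases h : l = k
          · subst h; rw [Pi.single_eq_same]
          · rw [Pi.single_eq_of_ne h]; exact hall l h
        refine ⟨1, k, u k, ?_, by rw [Units.val_one, Matrix.one_mulVec]; exact hu.symm⟩
        rw [norm1]
        exact Finset.single_le_sum (f := fun i => (u i).natAbs) (fun _ _ => Nat.zero_le _)
          (Finset.mem_univ k)

theorem lemB {m : ℕ} (hm : 0 < m) (k : Fin m) (v : ℤ) :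
    ∃ g : (Matrix (Fin m) (Fin m) ℤ)ˣ,
      (g : Matrix (Fin m) (Fin m) ℤ).mulVec (Pi.single (⟨0, hm⟩ : Fin m) ((v.natAbs : ℤ)))
        = Pi.single k v := by
  set z0 : Fin m := ⟨0, hm⟩ with hz0
  set c : ℤ := (v.natAbs : ℤ) with hc
  have step1 : ∃ g : (Matrix (Fin m) (Fin m) ℤ)ˣ,
      (g : Matrix (Fin m) (Fin m) ℤ).mulVec (Pi.single z0 c) = Pi.single k c := by
    by_cases hk : k = z0
    · exact ⟨1, by rw [Units.val_one, Matrix.one_mulVec, hk]⟩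
    · refine ⟨elemUnit z0 k (fun h => hk h) (-1) * elemUnit k z0 (fun h => hk h.symm) 1, ?_⟩
      rw [Units.val_mul, ← Matrix.mulVec_mulVec]
      have h1 : ((elemUnit k z0 (fun h => hk h.symm) 1 : (Matrix (Fin m) (Fin m) ℤ)ˣ) :
          Matrix (Fin m) (Fin m) ℤ).mulVec (Pi.single z0 c)
            = Pi.single z0 c + Pi.single k c := by
        show ((1 : Matrix (Fin m) (Fin m) ℤ) + Matrix.single k z0 (1:ℤ)).mulVec
            (Pi.single z0 c) = Pi.single z0 c + Pi.single k c
        rw [Matrix.add_mulVec, Matrix.one_mulVec, std_mulVec, Pi.single_eq_same, one_mul]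
      rw [h1]
      have h2 : (Pi.single z0 c + Pi.single k c : Fin m → ℤ) k = c := by
        rw [Pi.add_apply, Pi.single_eq_of_ne hk, Pi.single_eq_same, zero_add]
      show ((1 : Matrix (Fin m) (Fin m) ℤ) + Matrix.single z0 k (-1:ℤ)).mulVec
          (Pi.single z0 c + Pi.single k c) = Pi.single k c
      rw [Matrix.add_mulVec, Matrix.one_mulVec, std_mulVec, h2]
      funext l
      simp only [Pi.add_apply, Pi.single_apply]
      by_cases h : l = z0 <;> by_cases h' : l = k <;> simp [h, h', hk] <;> first | omega | skip
  obtain ⟨g1, hg1⟩ := step1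
  set δ : Fin m → ℤ := fun i => if v < 0 ∧ i = k then -1 else 1 with hδ
  have hδ2 : ∀ i, δ i * δ i = 1 := by
    intro i
    rw [hδ]
    by_cases h : v < 0 ∧ i = k <;> simp [h]
  refine ⟨diagUnit δ hδ2 * g1, ?_⟩
  rw [Units.val_mul, ← Matrix.mulVec_mulVec, hg1]
  show (Matrix.diagonal δ).mulVec (Pi.single k c) = Pi.single k v
  rw [show (Matrix.diagonal δ).mulVec (Pi.single k c) = fun i => Matrix.diagonal δ i k * c from
    funext fun i => by rw [Matrix.mulVec_single]; rfl]
  funext l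
  by_cases h : l = k
  · rw [h, Pi.single_eq_same, Matrix.diagonal_apply_eq]
    show (if v < 0 ∧ k = k then (-1:ℤ) else 1) * c = v
    rw [hc]
    simp only [and_true]
    by_cases hv : v < 0
    · rw [if_pos hv]; omega
    · rw [if_neg hv]; omega
  · rw [Pi.single_eq_of_ne h, Matrix.diagonal_apply_ne _ h, zero_mul]

theorem reduce {m : ℕ} (hm : 0 < m) (u : Fin m → ℤ) :
    ∃ (d : ℕ) (g : (Matrix (Fin m) (Fin m) ℤ)ˣ), d ≤ norm1 u ∧
      (g : Matrix (Fin m) (Fin m) ℤ).mulVec (((d : ℤ)) • Pi.single (⟨0, hm⟩ : Fin m) (1:ℤ)) = u := by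
  obtain ⟨g1, k, v, hv, hg1⟩ := lemA (norm1 u) hm u rfl
  obtain ⟨g2, hg2⟩ := lemB hm k v
  refine ⟨v.natAbs, g1 * g2, hv, ?_⟩
  have hsm : ((v.natAbs : ℤ)) • (Pi.single (⟨0, hm⟩ : Fin m) (1:ℤ) : Fin m → ℤ)
      = Pi.single (⟨0, hm⟩ : Fin m) ((v.natAbs : ℤ)) := by
    funext l
    simp only [Pi.smul_apply, Pi.single_apply, smul_eq_mul, mul_ite, mul_one, mul_zero]
  rw [hsm, Units.val_mul, ← Matrix.mulVec_mulVec, hg2, hg1]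




variable (mm NN : ℕ) [NeZero NN]

noncomputable def redMap : (Matrix (Fin mm) (Fin mm) ℤ)ˣ →* (Matrix (Fin mm) (Fin mm) (ZMod NN))ˣ :=
  Units.map (RingHom.toMonoidHom (RingHom.mapMatrix (Int.castRingHom (ZMod NN))))

noncomputable def Hcong : Subgroup (Matrix (Fin mm) (Fin mm) ℤ)ˣ := (redMap mm NN).ker

theorem finiteQuotHcong : Finite ((Matrix (Fin mm) (Fin mm) ℤ)ˣ ⧸ Hcong mm NN) :=
  Finite.of_injective _ (QuotientGroup.kerLift_injective (redMap mm NN))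

theorem Hcong_entry_dvd {γ : (Matrix (Fin mm) (Fin mm) ℤ)ˣ} (hγ : γ ∈ Hcong mm NN)
    (i j : Fin mm) :
    (NN : ℤ) ∣ ((γ : Matrix (Fin mm) (Fin mm) ℤ) i j - (1 : Matrix (Fin mm) (Fin mm) ℤ) i j) := by
  have h1 : redMap mm NN γ = 1 := hγ
  have h2 : ((redMap mm NN γ : (Matrix (Fin mm) (Fin mm) (ZMod NN))ˣ) :
      Matrix (Fin mm) (Fin mm) (ZMod NN)) = 1 := by rw [h1]; rfl
  have h3 : (((γ : Matrix (Fin mm) (Fin mm) ℤ) i j : ℤ) : ZMod NN)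
      = (1 : Matrix (Fin mm) (Fin mm) (ZMod NN)) i j := by
    rw [← h2]
    rfl
  rw [← ZMod.intCast_zmod_eq_zero_iff_dvd]
  push_cast
  rw [h3]
  rw [Matrix.one_apply, Matrix.one_apply]
  by_cases h : i = j <;> simp [h]

theorem Hcong_exists_psi {γ : (Matrix (Fin mm) (Fin mm) ℤ)ˣ} (hγ : γ ∈ Hcong mm NN) :
    ∃ Ψ : Matrix (Fin mm) (Fin mm) ℤ,
      (γ : Matrix (Fin mm) (Fin mm) ℤ) = 1 + ((NN : ℤ)) • Ψ := by
  refine ⟨Matrix.of fun i j =>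
    ((γ : Matrix (Fin mm) (Fin mm) ℤ) i j - (1 : Matrix (Fin mm) (Fin mm) ℤ) i j) / (NN : ℤ), ?_⟩
  ext i j
  rw [Matrix.add_apply, Matrix.smul_apply]
  have hd := Hcong_entry_dvd mm NN hγ i j
  have : (NN : ℤ) • (((γ : Matrix (Fin mm) (Fin mm) ℤ) i j
      - (1 : Matrix (Fin mm) (Fin mm) ℤ) i j) / (NN : ℤ))
      = (γ : Matrix (Fin mm) (Fin mm) ℤ) i j - (1 : Matrix (Fin mm) (Fin mm) ℤ) i j := by
    rw [smul_eq_mul, Int.mul_ediv_cancel' hd]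
  rw [Matrix.of_apply, this]
  ring

theorem Hcong_mulVec_dvd {γ : (Matrix (Fin mm) (Fin mm) ℤ)ˣ} (hγ : γ ∈ Hcong mm NN)
    (u : Fin mm → ℤ) (i : Fin mm) :
    (NN : ℤ) ∣ ((γ : Matrix (Fin mm) (Fin mm) ℤ).mulVec u i - u i) := by
  obtain ⟨Ψ, hΨ⟩ := Hcong_exists_psi mm NN hγ
  rw [hΨ, Matrix.add_mulVec, Matrix.one_mulVec, Matrix.smul_mulVec]
  simp only [Pi.add_apply, Pi.smul_apply, smul_eq_mul]
  rw [add_comm, add_sub_cancel_right]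
  exact Dvd.intro _ rfl

theorem Hcong_decomp (gl : (Matrix (Fin mm) (Fin mm) ℤ)ˣ) :
    ∃ γ ∈ Hcong mm NN,
      gl = γ * (Quotient.out (QuotientGroup.mk (s := Hcong mm NN) gl)) := by
  set t := Quotient.out (QuotientGroup.mk (s := Hcong mm NN) gl) with ht
  have hmk : (QuotientGroup.mk (s := Hcong mm NN) t) = QuotientGroup.mk (s := Hcong mm NN) gl :=
    QuotientGroup.out_eq' _
  have hmem : t⁻¹ * gl ∈ Hcong mm NN := by
    rw [← QuotientGroup.eq]
    exact hmk
  haveI : (Hcong mm NN).Normal := MonoidHom.normal_ker _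
  refine ⟨t * (t⁻¹ * gl) * t⁻¹, Subgroup.Normal.conj_mem ‹_› _ hmem t, ?_⟩
  group


section Main

variable {G : Type*} [Group G] (m : ℕ) (A : Subgroup G) [A.Normal]
  (e : A ≃* Multiplicative (Fin m → ℤ)) (sgn : G →* ℤˣ)

/-- inclusion of the lattice into `G` -/
noncomputable def iV (v : Fin m → ℤ) : G := ((e.symm (Multiplicative.ofAdd v) : A) : G)

noncomputable def thA (a : A) : Fin m → ℤ := Multiplicative.toAdd (e a)

theorem iV_mem (v : Fin m → ℤ) : iV m A e v ∈ A := (e.symm (Multiplicative.ofAdd v)).2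

theorem iV_thA (a : A) : iV m A e (thA m A e a) = (a : G) := by
  simp [iV, thA]

theorem thA_iV (v : Fin m → ℤ) : thA m A e ⟨iV m A e v, iV_mem m A e v⟩ = v := by
  simp [iV, thA]

theorem iV_add (v w : Fin m → ℤ) : iV m A e (v + w) = iV m A e v * iV m A e w := by
  simp only [iV, ← Subgroup.coe_mul, ← map_mul, ← ofAdd_add]

theorem iV_zero : iV m A e 0 = 1 := by
  simp [iV]

theorem iV_zsmul (k : ℤ) (v : Fin m → ℤ) : iV m A e (k • v) = (iV m A e v) ^ k := by
  have : Multiplicative.ofAdd (k • v) = (Multiplicative.ofAdd v) ^ k := rfl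
  simp only [iV, this, map_zpow]
  norm_cast

theorem iV_inj {v w : Fin m → ℤ} (h : iV m A e v = iV m A e w) : v = w := by
  have h2 : (e.symm (Multiplicative.ofAdd v)) = (e.symm (Multiplicative.ofAdd w)) :=
    Subtype.ext h
  have := e.symm.injective h2
  exact Multiplicative.ofAdd.injective this

include e in
theorem A_comm (a b : A) : (a : G) * b = (b : G) * a := by
  have : a * b = b * a := by
    apply e.injective
    rw [map_mul, map_mul, mul_comm]
  exact_mod_cast congrArg Subtype.val this

/-- section of the quotient map -/
noncomputable def sQ (q : G ⧸ A) : G :=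
  letI := Classical.dec (q = 1)
  if q = 1 then 1 else q.out

theorem sQ_spec (q : G ⧸ A) : ((sQ A q : G) : G ⧸ A) = q := by
  unfold sQ
  split
  next h => rw [h]; rfl
  next h => exact QuotientGroup.out_eq' q

theorem sQ_one : sQ A (1 : G ⧸ A) = 1 := by simp [sQ]

theorem xp_mem (g : G) : (sQ A ((g : G ⧸ A)))⁻¹ * g ∈ A := by
  rw [← QuotientGroup.eq_one_iff]
  simp [QuotientGroup.mk_mul, QuotientGroup.mk_inv, sQ_spec]

/-- the `A`-coordinate of `g` -/
noncomputable def xp (g : G) : Fin m → ℤ := thA m A e ⟨(sQ A ((g : G ⧸ A)))⁻¹ * g, xp_mem A g⟩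

theorem decomp (g : G) : sQ A ((g : G ⧸ A)) * iV m A e (xp m A e g) = g := by
  rw [xp, iV_thA]
  simp

theorem mk_iV (v : Fin m → ℤ) : ((iV m A e v : G) : G ⧸ A) = 1 := by
  rw [QuotientGroup.eq_one_iff]
  exact iV_mem m A e v

theorem mk_can (q : G ⧸ A) (v : Fin m → ℤ) : ((sQ A q * iV m A e v : G) : G ⧸ A) = q := by
  have : ((sQ A q * iV m A e v : G) : G ⧸ A) = ((sQ A q : G) : G ⧸ A) * ((iV m A e v : G) : G ⧸ A) := by
    simp
  rw [this, mk_iV, sQ_spec, mul_one]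

theorem xp_can (q : G ⧸ A) (v : Fin m → ℤ) : xp m A e (sQ A q * iV m A e v) = v := by
  have h1 := mk_can m A e q v
  rw [xp]
  have : (sQ A ((sQ A q * iV m A e v : G) : G ⧸ A))⁻¹ * (sQ A q * iV m A e v) = iV m A e v := by
    rw [h1]; group
  simp_rw [this]
  exact thA_iV m A e v

theorem xp_sQ (q : G ⧸ A) : xp m A e (sQ A q) = 0 := by
  have := xp_can m A e q 0
  rwa [iV_zero, mul_one] at this

theorem xp_one : xp m A e 1 = 0 := by
  have := xp_sQ m A e 1
  rwa [sQ_one] at this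

theorem hconj (hsgn : ∀ g x : G, x ∈ A → g⁻¹ * x * g = x ^ ((sgn g : ℤ)))
    (g : G) (v : Fin m → ℤ) :
    iV m A e v * g = g * iV m A e ((sgn g : ℤ) • v) := by
  have h := hsgn g (iV m A e v) (iV_mem m A e v)
  rw [← iV_zsmul] at h
  calc iV m A e v * g = g * (g⁻¹ * iV m A e v * g) := by group
    _ = g * iV m A e ((sgn g : ℤ) • v) := by rw [h]

/-- the 2-cocycle -/
noncomputable def coc (p q : G ⧸ A) : Fin m → ℤ := xp m A e (sQ A p * sQ A q)

theorem coc_spec (p q : G ⧸ A) :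
    sQ A p * sQ A q = sQ A (p * q) * iV m A e (coc m A e p q) := by
  have h1 : ((sQ A p * sQ A q : G) : G ⧸ A) = p * q := by
    simp [QuotientGroup.mk_mul, sQ_spec]
  conv_lhs => rw [← decomp m A e (sQ A p * sQ A q)]
  rw [h1]
  rfl

/-- the sign character on the quotient -/
noncomputable def eps (q : G ⧸ A) : ℤˣ := sgn (sQ A q)

theorem eps_one : eps A sgn (1 : G ⧸ A) = 1 := by simp [eps, sQ_one]

include e in
theorem sgn_A (hm : 1 ≤ m) (hsgn : ∀ g x : G, x ∈ A → g⁻¹ * x * g = x ^ ((sgn g : ℤ)))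
    (a : G) (ha : a ∈ A) : sgn a = 1 := by
  rcases Int.units_eq_one_or (sgn a) with h | h
  · exact h
  · exfalso
    set x := iV m A e (Pi.single (⟨0, hm⟩ : Fin m) 1) with hx
    have h1 := hsgn a x (iV_mem m A e _)
    rw [h, ← iV_zsmul] at h1
    have h2 : a⁻¹ * x * a = x := by
      have := A_comm m A e ⟨a, ha⟩ ⟨x, iV_mem m A e _⟩
      simp only [Subtype.coe_mk] at this
      rw [show a⁻¹ * x * a = a⁻¹ * (x * a) by group, ← this]
      group
    rw [h2] at h1
    have h3 : Pi.single (⟨0, hm⟩ : Fin m) (1:ℤ) = ((-1 : ℤ) : ℤ) • Pi.single (⟨0, hm⟩ : Fin m) (1:ℤ) :=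
      iV_inj m A e h1
    have := congrFun h3 ⟨0, hm⟩
    simp at this

include e in
theorem sgn_eq_eps (hm : 1 ≤ m) (hsgn : ∀ g x : G, x ∈ A → g⁻¹ * x * g = x ^ ((sgn g : ℤ)))
    (g : G) : sgn g = eps A sgn ((g : G ⧸ A)) := by
  conv_lhs => rw [← decomp m A e g]
  rw [map_mul, sgn_A m A e sgn hm hsgn _ (iV_mem m A e _), mul_one, eps]

include e in
theorem eps_mul (hm : 1 ≤ m) (hsgn : ∀ g x : G, x ∈ A → g⁻¹ * x * g = x ^ ((sgn g : ℤ)))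
    (p q : G ⧸ A) : eps A sgn (p * q) = eps A sgn p * eps A sgn q := by
  have := congrArg sgn (coc_spec m A e p q)
  rw [map_mul, map_mul, sgn_A m A e sgn hm hsgn _ (iV_mem m A e _), mul_one] at this
  rw [eps, eps, eps, ← this]

include e in
theorem eps_inv (hm : 1 ≤ m) (hsgn : ∀ g x : G, x ∈ A → g⁻¹ * x * g = x ^ ((sgn g : ℤ)))
    (q : G ⧸ A) : eps A sgn q⁻¹ = eps A sgn q := by
  have h : eps A sgn q⁻¹ * eps A sgn q = 1 := by
    rw [← eps_mul m A e sgn hm hsgn, inv_mul_cancel, eps_one]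
  have h2 : eps A sgn q⁻¹ = (eps A sgn q)⁻¹ := by
    exact eq_inv_of_mul_eq_one_left h
  rw [h2, Int.units_inv_eq_self]

theorem xp_mul (hm : 1 ≤ m) (hsgn : ∀ g x : G, x ∈ A → g⁻¹ * x * g = x ^ ((sgn g : ℤ)))
    (g h : G) :
    xp m A e (g * h) =
      coc m A e ((g : G ⧸ A)) ((h : G ⧸ A)) + ((eps A sgn ((h : G ⧸ A)) : ℤ)) • xp m A e g
        + xp m A e h := by
  have hg := decomp m A e g
  have hh := decomp m A e h
  have key : g * h = sQ A ((g : G ⧸ A) * (h : G ⧸ A)) *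
      iV m A e (coc m A e ((g : G ⧸ A)) ((h : G ⧸ A))
        + ((eps A sgn ((h : G ⧸ A)) : ℤ)) • xp m A e g + xp m A e h) := by
    conv_lhs => rw [← hg, ← hh]
    rw [show sQ A ((g : G⧸A)) * iV m A e (xp m A e g) * (sQ A ((h : G⧸A)) * iV m A e (xp m A e h))
        = sQ A ((g : G⧸A)) * (iV m A e (xp m A e g) * sQ A ((h : G⧸A))) * iV m A e (xp m A e h) by group]
    rw [hconj m A e sgn hsgn (sQ A ((h : G⧸A))) (xp m A e g)]
    rw [show (sgn (sQ A ((h : G⧸A))) : ℤ) = (eps A sgn ((h : G⧸A)) : ℤ) by rw [eps]]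
    rw [show sQ A ((g:G⧸A)) * (sQ A ((h:G⧸A)) * iV m A e ((eps A sgn ((h:G⧸A)) : ℤ) • xp m A e g)) * iV m A e (xp m A e h)
        = (sQ A ((g:G⧸A)) * sQ A ((h:G⧸A))) * (iV m A e ((eps A sgn ((h:G⧸A)) : ℤ) • xp m A e g) * iV m A e (xp m A e h)) by group]
    rw [coc_spec m A e, ← iV_add, mul_assoc, ← iV_add, add_assoc]
  have hq : ((g * h : G) : G ⧸ A) = (g : G ⧸ A) * (h : G ⧸ A) := by simp
  conv_lhs => rw [key]
  rw [← hq] at key ⊢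
  rw [show ((g*h : G) : G ⧸ A) = ((g:G⧸A)) * ((h:G⧸A)) by simp] at *
  exact xp_can m A e _ _

include e in
theorem cocy (hm : 1 ≤ m) (hsgn : ∀ g x : G, x ∈ A → g⁻¹ * x * g = x ^ ((sgn g : ℤ)))
    (p q r : G ⧸ A) :
    coc m A e (p * q) r + ((eps A sgn r : ℤ)) • coc m A e p q
      = coc m A e p (q * r) + coc m A e q r := by
  have h1 : xp m A e ((sQ A p * sQ A q) * sQ A r)
      = coc m A e (p * q) r + ((eps A sgn r : ℤ)) • coc m A e p q := by
    have := xp_mul m A e sgn hm hsgn (sQ A p * sQ A q) (sQ A r)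
    rw [xp_sQ] at this
    have hq : ((sQ A p * sQ A q : G) : G ⧸ A) = p * q := by simp [sQ_spec]
    rw [hq, sQ_spec] at this
    rw [this]
    show coc m A e (p*q) r + (eps A sgn r : ℤ) • coc m A e p q + 0 = _
    abel
  have h2 : xp m A e ((sQ A p * sQ A q) * sQ A r)
      = coc m A e p (q * r) + coc m A e q r := by
    rw [mul_assoc]
    have := xp_mul m A e sgn hm hsgn (sQ A p) (sQ A q * sQ A r)
    rw [xp_sQ] at this
    have hq : ((sQ A q * sQ A r : G) : G ⧸ A) = q * r := by simp [sQ_spec]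
    rw [hq, sQ_spec] at this
    rw [this]
    show coc m A e p (q*r) + (eps A sgn (q*r) : ℤ) • (0:Fin m → ℤ) + coc m A e q r = _
    rw [smul_zero]
    abel
  rw [← h1, h2]

section FiniteQ
variable [A.FiniteIndex]

noncomputable local instance fintypeQA : Fintype (G ⧸ A) := Fintype.ofFinite _

theorem eps_sq (r : G ⧸ A) : ((eps A sgn r : ℤ)) * ((eps A sgn r : ℤ)) = 1 := by
  rw [← Units.val_mul, Int.units_mul_self, Units.val_one]

/-- the corestriction-style 1-chain -/
noncomputable def Bv (q : G ⧸ A) : Fin m → ℤ :=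
  ∑ r : G ⧸ A, ((eps A sgn r : ℤ)) • coc m A e q r

include e in
theorem Bident (hm : 1 ≤ m) (hsgn : ∀ g x : G, x ∈ A → g⁻¹ * x * g = x ^ ((sgn g : ℤ)))
    (p q : G ⧸ A) :
    Bv m A e sgn (p * q) + ((Fintype.card (G ⧸ A) : ℤ)) • coc m A e p q
      = ((eps A sgn q : ℤ)) • Bv m A e sgn p + Bv m A e sgn q := by
  have key : ∑ r : G ⧸ A, ((eps A sgn r : ℤ)) •
        (coc m A e (p*q) r + ((eps A sgn r : ℤ)) • coc m A e p q)
      = ∑ r : G ⧸ A, ((eps A sgn r : ℤ)) • (coc m A e p (q*r) + coc m A e q r) := by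
    apply Finset.sum_congr rfl
    intro r _
    rw [cocy m A e sgn hm hsgn p q r]
  have lhs_eq : ∑ r : G ⧸ A, ((eps A sgn r : ℤ)) •
        (coc m A e (p*q) r + ((eps A sgn r : ℤ)) • coc m A e p q)
      = Bv m A e sgn (p*q) + ((Fintype.card (G ⧸ A) : ℤ)) • coc m A e p q := by
    simp_rw [smul_add, Finset.sum_add_distrib, smul_smul, eps_sq, one_smul,
      Finset.sum_const, Finset.card_univ]
    rw [Bv, Nat.cast_smul_eq_nsmul]
  have reindex : ∑ r : G ⧸ A, ((eps A sgn r : ℤ)) • coc m A e p (q*r)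
      = ((eps A sgn q : ℤ)) • Bv m A e sgn p := by
    rw [Bv, Finset.smul_sum]
    apply Fintype.sum_equiv (Equiv.mulLeft q)
    intro r
    simp only [Equiv.coe_mulLeft]
    rw [smul_smul]
    congr 1
    rw [eps_mul m A e sgn hm hsgn q r]
    push_cast
    rw [← mul_assoc, eps_sq, one_mul]
  have rhs_eq : ∑ r : G ⧸ A, ((eps A sgn r : ℤ)) • (coc m A e p (q*r) + coc m A e q r)
      = ((eps A sgn q : ℤ)) • Bv m A e sgn p + Bv m A e sgn q := by
    simp_rw [smul_add, Finset.sum_add_distrib]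
    rw [reindex]
    rfl
  rw [← lhs_eq, key, rhs_eq]

section Phi
variable (M Minv Ψ Ψinv : Matrix (Fin m) (Fin m) ℤ)

noncomputable def phiFun (g : G) : G :=
  sQ A ((g : G ⧸ A)) *
    iV m A e (Ψ.mulVec (Bv m A e sgn ((g : G ⧸ A))) + M.mulVec (xp m A e g))

theorem phi_can (q : G ⧸ A) (v : Fin m → ℤ) :
    phiFun m A e sgn M Ψ (sQ A q * iV m A e v)
      = sQ A q * iV m A e (Ψ.mulVec (Bv m A e sgn q) + M.mulVec v) := by
  rw [phiFun, mk_can, xp_can]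

theorem can_mul (hm : 1 ≤ m) (hsgn : ∀ g x : G, x ∈ A → g⁻¹ * x * g = x ^ ((sgn g : ℤ)))
    (p q : G ⧸ A) (v w : Fin m → ℤ) :
    (sQ A p * iV m A e v) * (sQ A q * iV m A e w)
      = sQ A (p * q) * iV m A e (coc m A e p q + ((eps A sgn q : ℤ)) • v + w) := by
  have hp : (((sQ A p * iV m A e v : G)) : G ⧸ A) = p := mk_can m A e p v
  have hq : (((sQ A q * iV m A e w : G)) : G ⧸ A) = q := mk_can m A e q w
  have h1 := decomp m A e ((sQ A p * iV m A e v) * (sQ A q * iV m A e w))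
  have h2 := xp_mul m A e sgn hm hsgn (sQ A p * iV m A e v) (sQ A q * iV m A e w)
  rw [xp_can, xp_can, hp, hq] at h2
  have h3 : (((sQ A p * iV m A e v) * (sQ A q * iV m A e w) : G) : G ⧸ A) = p * q := by
    rw [QuotientGroup.mk_mul, hp, hq]
  rw [h3, h2] at h1
  exact h1.symm

theorem phi_hom (hm : 1 ≤ m) (hsgn : ∀ g x : G, x ∈ A → g⁻¹ * x * g = x ^ ((sgn g : ℤ)))
    (hM : M = 1 + ((Fintype.card (G ⧸ A) : ℤ)) • Ψ) (g h : G) :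
    phiFun m A e sgn M Ψ (g * h) = phiFun m A e sgn M Ψ g * phiFun m A e sgn M Ψ h := by
  have hg := decomp m A e g
  have hh := decomp m A e h
  set p := ((g : G ⧸ A)) with hp
  set q := ((h : G ⧸ A)) with hq
  conv_lhs => rw [← hg, ← hh]
  conv_rhs => rw [← hg, ← hh]
  rw [can_mul m A e sgn hm hsgn, phi_can, phi_can, phi_can, can_mul m A e sgn hm hsgn]
  congr 1
  have hB := Bident m A e sgn hm hsgn p q
  have hcv : ((Fintype.card (G ⧸ A) : ℤ)) • coc m A e p q
      = ((eps A sgn q : ℤ)) • Bv m A e sgn p + Bv m A e sgn q - Bv m A e sgn (p * q) := by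
    rw [← hB]; abel
  rw [Matrix.mulVec_add, Matrix.mulVec_add, Matrix.mulVec_smul, hM]
  rw [Matrix.add_mulVec, Matrix.one_mulVec, Matrix.smul_mulVec,
    ← Matrix.mulVec_smul, hcv, Matrix.mulVec_sub, Matrix.mulVec_add, Matrix.mulVec_smul]
  congr 1
  simp only [smul_add]
  abel

theorem phi_inv_aux (hmat : Minv * Ψ + Ψinv = 0) (hMM : Minv * M = 1) (g : G) :
    phiFun m A e sgn Minv Ψinv (phiFun m A e sgn M Ψ g) = g := by
  have hg := decomp m A e g
  conv_lhs => rw [← hg]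
  rw [phi_can, phi_can]
  conv_rhs => rw [← hg]
  congr 1
  rw [Matrix.mulVec_add, Matrix.mulVec_mulVec, Matrix.mulVec_mulVec, hMM, Matrix.one_mulVec]
  have hcomb : Ψinv.mulVec (Bv m A e sgn ((g : G ⧸ A))) + (Minv * Ψ).mulVec (Bv m A e sgn ((g : G ⧸ A)))
      = ((Minv * Ψ + Ψinv)).mulVec (Bv m A e sgn ((g : G ⧸ A))) := by
    rw [Matrix.add_mulVec]; abel
  congr 1
  rw [← add_assoc, hcomb, hmat, Matrix.zero_mulVec, zero_add]

theorem smul_matrix_cancel {k : ℤ} (hk : k ≠ 0) {X : Matrix (Fin m) (Fin m) ℤ}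
    (h : k • X = 0) : X = 0 := by
  ext i j
  have := congrFun (congrFun h i) j
  simp only [Matrix.smul_apply, smul_eq_mul, Matrix.zero_apply] at this ⊢
  rcases mul_eq_zero.1 this with h' | h'
  · exact absurd h' hk
  · exact h'

/-- the automorphism of `G` associated to a congruence matrix -/
noncomputable def phiAut (hm : 1 ≤ m)
    (hsgn : ∀ g x : G, x ∈ A → g⁻¹ * x * g = x ^ ((sgn g : ℤ)))
    (hM : M = 1 + ((Fintype.card (G ⧸ A) : ℤ)) • Ψ)
    (hMinv : Minv = 1 + ((Fintype.card (G ⧸ A) : ℤ)) • Ψinv)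
    (h1 : M * Minv = 1) (h2 : Minv * M = 1) : MulAut G where
  toFun := phiFun m A e sgn M Ψ
  invFun := phiFun m A e sgn Minv Ψinv
  left_inv := by
    intro g
    apply phi_inv_aux m A e sgn M Minv Ψ Ψinv _ h2 g
    apply smul_matrix_cancel m (k := (Fintype.card (G ⧸ A) : ℤ))
      (by exact_mod_cast Fintype.card_ne_zero)
    rw [smul_add]
    rw [show (Fintype.card (G ⧸ A) : ℤ) • (Minv * Ψ) = Minv * ((Fintype.card (G ⧸ A) : ℤ) • Ψ) by
      rw [Matrix.mul_smul]]
    rw [show (Fintype.card (G ⧸ A) : ℤ) • Ψinv = Minv - 1 by rw [hMinv]; abel,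
      show (Fintype.card (G ⧸ A) : ℤ) • Ψ = M - 1 by rw [hM]; abel]
    rw [mul_sub, h2, mul_one]
    abel
  right_inv := by
    intro g
    apply phi_inv_aux m A e sgn Minv M Ψinv Ψ _ h1 g
    apply smul_matrix_cancel m (k := (Fintype.card (G ⧸ A) : ℤ))
      (by exact_mod_cast Fintype.card_ne_zero)
    rw [smul_add]
    rw [show (Fintype.card (G ⧸ A) : ℤ) • (M * Ψinv) = M * ((Fintype.card (G ⧸ A) : ℤ) • Ψinv) by
      rw [Matrix.mul_smul]]
    rw [show (Fintype.card (G ⧸ A) : ℤ) • Ψinv = Minv - 1 by rw [hMinv]; abel,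
      show (Fintype.card (G ⧸ A) : ℤ) • Ψ = M - 1 by rw [hM]; abel]
    rw [mul_sub, h1, mul_one]
    abel
  map_mul' := phi_hom m A e sgn M Ψ hm hsgn hM

theorem phiAut_can (hm : 1 ≤ m)
    (hsgn : ∀ g x : G, x ∈ A → g⁻¹ * x * g = x ^ ((sgn g : ℤ)))
    (hM : M = 1 + ((Fintype.card (G ⧸ A) : ℤ)) • Ψ)
    (hMinv : Minv = 1 + ((Fintype.card (G ⧸ A) : ℤ)) • Ψinv)
    (h1 : M * Minv = 1) (h2 : Minv * M = 1) (q : G ⧸ A) (v : Fin m → ℤ) :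
    phiAut m A e sgn M Minv Ψ Ψinv hm hsgn hM hMinv h1 h2 (sQ A q * iV m A e v)
      = sQ A q * iV m A e (Ψ.mulVec (Bv m A e sgn q) + M.mulVec v) :=
  phi_can m A e sgn M Ψ q v

end Phi

theorem smul_vec_cancel {k : ℤ} (hk : k ≠ 0) {v w : Fin m → ℤ}
    (h : k • v = k • w) : v = w := by
  funext i
  have := congrFun h i
  simp only [Pi.smul_apply, smul_eq_mul] at this
  exact mul_left_cancel₀ hk this

theorem norm1_zero : norm1 (0 : Fin m → ℤ) = 0 := by simp [norm1]

noncomputable def KC : ℕ :=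
  Finset.univ.sup (fun p : G ⧸ A => Finset.univ.sup (fun q : G ⧸ A => norm1 (coc m A e p q)))

noncomputable def KS (S : Finset G) : ℕ :=
  S.sup (fun g => max (norm1 (xp m A e g)) (norm1 (xp m A e g⁻¹)))

noncomputable def KB : ℕ :=
  Finset.univ.sup (fun q : G ⧸ A => norm1 (Bv m A e sgn q))

theorem norm1_coc_le (p q : G ⧸ A) : norm1 (coc m A e p q) ≤ KC m A e :=
  le_trans (Finset.le_sup (f := fun q : G ⧸ A => norm1 (coc m A e p q)) (Finset.mem_univ q))
    (Finset.le_sup (f := fun p : G ⧸ A => Finset.univ.sup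
      (fun q : G ⧸ A => norm1 (coc m A e p q))) (Finset.mem_univ p))

theorem norm1_Bv_le (q : G ⧸ A) : norm1 (Bv m A e sgn q) ≤ KB m A e sgn :=
  Finset.le_sup (f := fun q : G ⧸ A => norm1 (Bv m A e sgn q)) (Finset.mem_univ q)

theorem norm1_xp_gen {S : Finset G} {x : G}
    (hx : x ∈ (S : Set G) ∨ x⁻¹ ∈ (S : Set G)) : norm1 (xp m A e x) ≤ KS m A e S := by
  rcases hx with h | h
  · exact le_trans (le_max_left _ _)
      (Finset.le_sup (f := fun g => max (norm1 (xp m A e g)) (norm1 (xp m A e g⁻¹)))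
        (Finset.mem_coe.1 h))
  · rw [show x = (x⁻¹)⁻¹ by rw [inv_inv]]
    exact le_trans (le_max_right _ _)
      (Finset.le_sup (f := fun g => max (norm1 (xp m A e g)) (norm1 (xp m A e g⁻¹)))
        (Finset.mem_coe.1 h))

theorem ball_xp_bound (hm : 1 ≤ m)
    (hsgn : ∀ g x : G, x ∈ A → g⁻¹ * x * g = x ^ ((sgn g : ℤ))) (S : Finset G) :
    ∀ l : List G, (∀ x ∈ l, x ∈ (S : Set G) ∨ x⁻¹ ∈ (S : Set G)) →
      norm1 (xp m A e l.prod) ≤ (KC m A e + KS m A e S) * l.length := by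
  intro l
  induction l with
  | nil =>
      intro _
      simp only [List.prod_nil, List.length_nil, mul_zero]
      rw [xp_one, norm1_zero]
  | cons x l ih =>
      intro hmem
      have hx : x ∈ (S : Set G) ∨ x⁻¹ ∈ (S : Set G) := hmem x List.mem_cons_self
      have hl : ∀ y ∈ l, y ∈ (S : Set G) ∨ y⁻¹ ∈ (S : Set G) :=
        fun y hy => hmem y (List.mem_cons_of_mem x hy)
      rw [List.prod_cons]
      rw [xp_mul m A e sgn hm hsgn x l.prod]
      have h1 := norm1_add (coc m A e ((x : G ⧸ A)) ((l.prod : G ⧸ A))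
          + ((eps A sgn ((l.prod : G ⧸ A)) : ℤ)) • xp m A e x) (xp m A e l.prod)
      have h2 := norm1_add (coc m A e ((x : G ⧸ A)) ((l.prod : G ⧸ A)))
          (((eps A sgn ((l.prod : G ⧸ A)) : ℤ)) • xp m A e x)
      have h3 : norm1 (((eps A sgn ((l.prod : G ⧸ A)) : ℤ)) • xp m A e x) = norm1 (xp m A e x) :=
        norm1_unit_smul _ _
      have h4 := norm1_coc_le m A e ((x : G ⧸ A)) ((l.prod : G ⧸ A))
      have h5 := norm1_xp_gen m A e hx
      have h6 := ih hl
      simp only [List.length_cons]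
      calc norm1 (coc m A e ((x : G ⧸ A)) ((l.prod : G ⧸ A))
            + ((eps A sgn ((l.prod : G ⧸ A)) : ℤ)) • xp m A e x + xp m A e l.prod)
          ≤ norm1 (coc m A e ((x : G ⧸ A)) ((l.prod : G ⧸ A))
            + ((eps A sgn ((l.prod : G ⧸ A)) : ℤ)) • xp m A e x) + norm1 (xp m A e l.prod) := h1
        _ ≤ (KC m A e + KS m A e S) + (KC m A e + KS m A e S) * l.length := by omega
        _ = (KC m A e + KS m A e S) * (l.length + 1) := by ring

include A e sgn in
theorem upper (hm : 1 ≤ m)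
    (hsgn : ∀ g x : G, x ∈ A → g⁻¹ * x * g = x ^ ((sgn g : ℤ))) (S : Finset G) :
    GrowthLe (autGrowth (S : Set G)) (fun n => n) := by
  classical
  have hm0 : 0 < m := hm
  set z0 : Fin m := ⟨0, hm0⟩ with hz0
  set NQ := Fintype.card (G ⧸ A) with hNQ
  have hNQ0 : NQ ≠ 0 := Fintype.card_ne_zero
  haveI : NeZero NQ := ⟨hNQ0⟩
  haveI : Finite ((Matrix (Fin m) (Fin m) ℤ)ˣ ⧸ Hcong m NQ) := finiteQuotHcong m NQ
  set cH := Nat.card ((Matrix (Fin m) (Fin m) ℤ)ˣ ⧸ Hcong m NQ) with hcH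
  have hne : Nonempty ((Matrix (Fin m) (Fin m) ℤ)ˣ ⧸ Hcong m NQ) :=
    ⟨QuotientGroup.mk (s := Hcong m NQ) 1⟩
  have hcH0 : cH ≠ 0 := Nat.card_ne_zero.2 ⟨hne, ‹_›⟩
  set Kc := KC m A e with hKc
  set Ks := KS m A e S with hKs
  set Kb := KB m A e sgn with hKb
  set Dc := NQ * (Kc + Ks) + Kb + 1 with hDc
  refine ⟨NQ * cH * Dc + 1, by positivity, ?_⟩
  intro n
  have key : autGrowth (S : Set G) n ≤ NQ * (cH * (Dc * (n + 1))) := by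
    rw [autGrowth]
    have hcount := ncard_image_quotient_le (MulAction.orbitRel (MulAut G) G)
      (wordBall (S : Set G) n)
      (fun b : (G ⧸ A) × ((Matrix (Fin m) (Fin m) ℤ)ˣ ⧸ Hcong m NQ) × Fin (Dc * (n + 1)) =>
        if h : ∃ x : Fin m → ℤ, ((NQ : ℤ)) • x + Bv m A e sgn b.1
            = ((Quotient.out b.2.1 : (Matrix (Fin m) (Fin m) ℤ)ˣ) :
                Matrix (Fin m) (Fin m) ℤ).mulVec ((((b.2.2 : ℕ) : ℤ)) • Pi.single z0 1)
          then sQ A b.1 * iV m A e h.choose else 1) ?_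
    · calc (Quotient.mk (MulAction.orbitRel (MulAut G) G) '' wordBall (S : Set G) n).ncard
          ≤ Nat.card ((G ⧸ A) × ((Matrix (Fin m) (Fin m) ℤ)ˣ ⧸ Hcong m NQ) × Fin (Dc * (n + 1))) :=
            hcount
        _ = NQ * (cH * (Dc * (n + 1))) := by
            rw [Nat.card_prod, Nat.card_prod]
            congr 1
            · rw [Nat.card_eq_fintype_card]
            · congr 1
              rw [Nat.card_eq_fintype_card, Fintype.card_fin]
    · -- every ball element is in the orbit of some f b
      intro g hg
      set p := ((g : G ⧸ A)) with hp
      set X := xp m A e g with hX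
      have hxb : norm1 X ≤ (Kc + Ks) * n := by
        obtain ⟨l, hl1, hl2, hl3⟩ := hg
        rw [hX, ← hl3]
        calc norm1 (xp m A e l.prod) ≤ (Kc + Ks) * l.length :=
              ball_xp_bound m A e sgn hm hsgn S l hl1
          _ ≤ (Kc + Ks) * n := Nat.mul_le_mul_left _ hl2
      set u := ((NQ : ℤ)) • X + Bv m A e sgn p with hu
      have hun : norm1 u < Dc * (n + 1) := by
        have h1 := norm1_add (((NQ : ℤ)) • X) (Bv m A e sgn p)
        have h2 : norm1 (((NQ : ℤ)) • X) = NQ * norm1 X := norm1_nsmul NQ X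
        have h3 := norm1_Bv_le m A e sgn p
        have : norm1 u ≤ NQ * ((Kc + Ks) * n) + Kb := by
          rw [hu]
          calc norm1 (((NQ : ℤ)) • X + Bv m A e sgn p)
              ≤ norm1 (((NQ : ℤ)) • X) + norm1 (Bv m A e sgn p) := h1
            _ ≤ NQ * ((Kc + Ks) * n) + Kb := by
                rw [h2]
                have := Nat.mul_le_mul_left NQ hxb
                omega
        have hDN : Dc * (n + 1) = NQ * (Kc + Ks) * (n+1) + Kb * (n+1) + (n+1) := by
          rw [hDc]; ring
        nlinarith [Nat.zero_le (Kb * n), Nat.zero_le n]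
      obtain ⟨d0, gl, hd0, hgl⟩ := reduce hm0 u
      have hd0lt : d0 < Dc * (n + 1) := lt_of_le_of_lt hd0 hun
      obtain ⟨γ, hγmem, hγeq⟩ := Hcong_decomp m NQ gl
      set c := QuotientGroup.mk (s := Hcong m NQ) gl with hc
      set w := ((Quotient.out c : (Matrix (Fin m) (Fin m) ℤ)ˣ) :
        Matrix (Fin m) (Fin m) ℤ).mulVec (((d0 : ℤ)) • Pi.single z0 1) with hw
      have huw : ((γ : Matrix (Fin m) (Fin m) ℤ)).mulVec w = u := by
        rw [hw, Matrix.mulVec_mulVec, ← Units.val_mul, ← hγeq, hgl]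
      have hwu : w = ((γ⁻¹ : (Matrix (Fin m) (Fin m) ℤ)ˣ) : Matrix (Fin m) (Fin m) ℤ).mulVec u := by
        rw [← huw, Matrix.mulVec_mulVec, ← Units.val_mul, inv_mul_cancel γ, Units.val_one,
          Matrix.one_mulVec]
      have hdvd : ∀ i, (NQ : ℤ) ∣ (w i - Bv m A e sgn p i) := by
        intro i
        have h1 : (NQ : ℤ) ∣ (w i - u i) := by
          rw [hwu]
          exact Hcong_mulVec_dvd m NQ (inv_mem hγmem) u i
        have h2 : (NQ : ℤ) ∣ (u i - Bv m A e sgn p i) := by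
          refine ⟨X i, ?_⟩
          rw [hu]
          simp only [Pi.add_apply, Pi.smul_apply, smul_eq_mul]
          ring
        have h3 := dvd_add h1 h2
        have h4 : (w i - u i) + (u i - Bv m A e sgn p i) = w i - Bv m A e sgn p i := by ring
        rwa [h4] at h3
      have hex : ∃ x : Fin m → ℤ, ((NQ : ℤ)) • x + Bv m A e sgn p = w := by
        refine ⟨fun i => (w i - Bv m A e sgn p i) / (NQ : ℤ), ?_⟩
        funext i
        simp only [Pi.add_apply, Pi.smul_apply, smul_eq_mul]
        rw [Int.mul_ediv_cancel' (hdvd i)]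
        ring
      refine ⟨(p, c, ⟨d0, hd0lt⟩), ?_⟩
      have hfb : (if h : ∃ x : Fin m → ℤ, ((NQ : ℤ)) • x + Bv m A e sgn p = w
          then sQ A p * iV m A e h.choose else 1) = sQ A p * iV m A e hex.choose :=
        dif_pos hex
      obtain ⟨Ψ, hΨ⟩ := Hcong_exists_psi m NQ hγmem
      obtain ⟨Ψ', hΨ'⟩ := Hcong_exists_psi m NQ (inv_mem hγmem)
      have hMM1 : ((γ : Matrix (Fin m) (Fin m) ℤ)) * ((γ⁻¹ : (Matrix (Fin m) (Fin m) ℤ)ˣ) :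
          Matrix (Fin m) (Fin m) ℤ) = 1 := by
        rw [← Units.val_mul, mul_inv_cancel, Units.val_one]
      have hMM2 : (((γ⁻¹ : (Matrix (Fin m) (Fin m) ℤ)ˣ) : Matrix (Fin m) (Fin m) ℤ))
          * ((γ : Matrix (Fin m) (Fin m) ℤ)) = 1 := by
        rw [← Units.val_mul, inv_mul_cancel, Units.val_one]
      set φA := phiAut m A e sgn (↑γ) (↑(γ⁻¹)) Ψ Ψ' hm hsgn hΨ hΨ' hMM1 hMM2 with hφA
      have horb : φA (sQ A p * iV m A e hex.choose)
          = sQ A p * iV m A e (Ψ.mulVec (Bv m A e sgn p)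
              + ((γ : Matrix (Fin m) (Fin m) ℤ)).mulVec hex.choose) :=
        phiAut_can m A e sgn (↑γ) (↑(γ⁻¹)) Ψ Ψ' hm hsgn hΨ hΨ' hMM1 hMM2 p hex.choose
      have hxf := hex.choose_spec
      have hvec : Ψ.mulVec (Bv m A e sgn p)
          + ((γ : Matrix (Fin m) (Fin m) ℤ)).mulVec hex.choose = X := by
        apply smul_vec_cancel m (k := (NQ : ℤ)) (by exact_mod_cast hNQ0)
        have hstep1 : ((NQ : ℤ)) • Ψ.mulVec (Bv m A e sgn p)
            = ((γ : Matrix (Fin m) (Fin m) ℤ)).mulVec (Bv m A e sgn p) - Bv m A e sgn p := by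
          rw [← Matrix.smul_mulVec]
          rw [show ((NQ : ℤ)) • Ψ = (γ : Matrix (Fin m) (Fin m) ℤ) - 1 by rw [hΨ]; abel]
          rw [Matrix.sub_mulVec, Matrix.one_mulVec]
        have h5 : ((NQ : ℤ)) • hex.choose = w - Bv m A e sgn p := eq_sub_of_add_eq hxf
        have hstep2 : ((NQ : ℤ)) • ((γ : Matrix (Fin m) (Fin m) ℤ)).mulVec hex.choose
            = u - ((γ : Matrix (Fin m) (Fin m) ℤ)).mulVec (Bv m A e sgn p) := by
          calc ((NQ : ℤ)) • ((γ : Matrix (Fin m) (Fin m) ℤ)).mulVec hex.choose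
              = ((γ : Matrix (Fin m) (Fin m) ℤ)).mulVec (((NQ : ℤ)) • hex.choose) :=
                (Matrix.mulVec_smul _ _ _).symm
            _ = ((γ : Matrix (Fin m) (Fin m) ℤ)).mulVec (w - Bv m A e sgn p) := by
                exact congrArg _ h5
            _ = u - ((γ : Matrix (Fin m) (Fin m) ℤ)).mulVec (Bv m A e sgn p) := by
                rw [Matrix.mulVec_sub, huw]
        rw [smul_add, hstep1, hstep2, hu]
        abel
      have hfinal : φA (sQ A p * iV m A e hex.choose) = g := by
        rw [horb, hvec]
        exact decomp m A e g
      exact (congrArg (Quotient.mk (MulAction.orbitRel (MulAut G) G)) hfb).trans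
        ((quotient_orbit_eq_iff _ _).2 ⟨φA, hfinal⟩).symm
  calc autGrowth (S : Set G) n ≤ NQ * (cH * (Dc * (n + 1))) := key
    _ ≤ (NQ * cH * Dc + 1) * ((NQ * cH * Dc + 1) * n + (NQ * cH * Dc + 1))
        + (NQ * cH * Dc + 1) := by nlinarith [Nat.zero_le n]

end FiniteQ

noncomputable def ddiv {H : Type*} [Group H] (g : H) : ℕ := sSup {k : ℕ | ∃ y : H, y ^ k = g}

theorem ddiv_aut {H : Type*} [Group H] (φ : MulAut H) (g : H) : ddiv (φ g) = ddiv g := by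
  unfold ddiv
  congr 1
  ext k
  constructor
  · rintro ⟨y, hy⟩
    refine ⟨φ.symm y, ?_⟩
    apply φ.injective
    rw [map_pow, MulEquiv.apply_symm_apply, hy]
  · rintro ⟨y, hy⟩
    exact ⟨φ y, by rw [← map_pow, hy]⟩

section Lower
variable [A.FiniteIndex]

theorem pow_a (hm : 0 < m) (n : ℕ) :
    (iV m A e (Pi.single (⟨0, hm⟩ : Fin m) 1)) ^ n
      = iV m A e (((n : ℤ)) • Pi.single (⟨0, hm⟩ : Fin m) 1) := by
  rw [iV_zsmul, zpow_natCast]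

theorem a_pow_inj (hm : 0 < m) {x y : ℕ}
    (h : (iV m A e (Pi.single (⟨0, hm⟩ : Fin m) 1)) ^ x
       = (iV m A e (Pi.single (⟨0, hm⟩ : Fin m) 1)) ^ y) : x = y := by
  rw [pow_a m A e hm, pow_a m A e hm] at h
  have h2 := iV_inj m A e h
  have := congrFun h2 (⟨0, hm⟩ : Fin m)
  simp only [Pi.smul_apply, Pi.single_eq_same, smul_eq_mul, mul_one] at this
  exact_mod_cast this

theorem ddiv_mem_dvd (hm : 0 < m) (j : ℕ) (hj : 1 ≤ j) (k : ℕ)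
    (hk : k ∈ {k : ℕ | ∃ y : G, y ^ k = (iV m A e (Pi.single (⟨0, hm⟩ : Fin m) 1)) ^ j}) :
    k ∣ j * A.index := by
  obtain ⟨y, hy⟩ := hk
  have hk0 : k ≠ 0 := by
    rintro rfl
    rw [pow_zero] at hy
    have : (0:ℕ) = j := a_pow_inj m A e hm (by rw [pow_zero, hy])
    omega
  set z := y ^ A.index with hzdef
  have hz : z ∈ A := Subgroup.pow_index_mem A y
  set w := thA m A e ⟨z, hz⟩ with hw
  have hiw : iV m A e w = z := iV_thA m A e ⟨z, hz⟩
  have hzk : z ^ k = (iV m A e (Pi.single (⟨0, hm⟩ : Fin m) 1)) ^ (j * A.index) := by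
    rw [hzdef, ← pow_mul, mul_comm (A.index) k, pow_mul, hy, ← pow_mul]
  have hvec : iV m A e (((k : ℤ)) • w)
      = iV m A e ((((j * A.index : ℕ) : ℤ)) • Pi.single (⟨0, hm⟩ : Fin m) 1) := by
    rw [iV_zsmul, zpow_natCast, hiw, hzk, pow_a m A e hm]
  have h2 := iV_inj m A e hvec
  have h3 := congrFun h2 (⟨0, hm⟩ : Fin m)
  simp only [Pi.smul_apply, Pi.single_eq_same, smul_eq_mul, mul_one] at h3
  have : (k : ℤ) ∣ ((j * A.index : ℕ) : ℤ) := ⟨w (⟨0, hm⟩ : Fin m), h3.symm⟩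
  exact_mod_cast this

theorem ddiv_a_pow (hm : 0 < m) (j : ℕ) (hj : 1 ≤ j) :
    j ≤ ddiv ((iV m A e (Pi.single (⟨0, hm⟩ : Fin m) 1)) ^ j)
      ∧ ddiv ((iV m A e (Pi.single (⟨0, hm⟩ : Fin m) 1)) ^ j) ∣ j * A.index := by
  have hNpos : 0 < j * A.index := by
    have := A.index_ne_zero_of_finite
    positivity
  have hbdd : BddAbove {k : ℕ | ∃ y : G, y ^ k = (iV m A e (Pi.single (⟨0, hm⟩ : Fin m) 1)) ^ j} := by
    refine ⟨j * A.index, ?_⟩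
    intro k hk
    exact Nat.le_of_dvd hNpos (ddiv_mem_dvd m A e hm j hj k hk)
  have hne : j ∈ {k : ℕ | ∃ y : G, y ^ k = (iV m A e (Pi.single (⟨0, hm⟩ : Fin m) 1)) ^ j} :=
    ⟨iV m A e (Pi.single (⟨0, hm⟩ : Fin m) 1), rfl⟩
  constructor
  · exact le_csSup hbdd hne
  · exact ddiv_mem_dvd m A e hm j hj _ (Nat.sSup_mem ⟨j, hne⟩ hbdd)


include A e in
theorem lower (hm : 1 ≤ m) (S : Finset G) (hS : Subgroup.closure (S : Set G) = ⊤) :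
    GrowthLe (fun n => n) (autGrowth (S : Set G)) := by
  classical
  have hm0 : 0 < m := hm
  set a := iV m A e (Pi.single (⟨0, hm0⟩ : Fin m) 1) with ha
  obtain ⟨La, hLa⟩ := exists_wordBall_of_closure hS a
  set N₀ := A.index with hN
  have hN0 : N₀ ≠ 0 := A.index_ne_zero_of_finite
  refine ⟨N₀ + La + 1, by omega, ?_⟩
  intro n
  set lam := N₀ + La + 1 with hlam
  set R := lam * n + lam with hR
  set t : Finset ℕ := Finset.Icc 1 n with hT
  set D : ℕ → ℕ := fun j => ddiv (a ^ j) with hD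
  have hfact : ∀ j ∈ t, j ≤ D j ∧ D j ∣ j * N₀ := by
    intro j hj
    exact ddiv_a_pow m A e hm0 j (Finset.mem_Icc.1 hj).1
  have h1 : t.card ≤ N₀ * (t.image D).card := by
    apply Finset.card_le_mul_card_image
    intro v hv
    have hvfacts : ∀ j ∈ t.filter (fun j => D j = v), 1 ≤ j ∧ j ≤ v ∧ v ∣ j * N₀ := by
      intro j hj
      rw [Finset.mem_filter] at hj
      obtain ⟨hj1, hj2⟩ := hj
      obtain ⟨hle, hdvd⟩ := hfact j hj1
      exact ⟨(Finset.mem_Icc.1 hj1).1, hj2 ▸ hle, hj2 ▸ hdvd⟩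
    have hmaps : ∀ j ∈ t.filter (fun j => D j = v), j * N₀ / v ∈ Finset.Icc 1 N₀ := by
      intro j hj
      obtain ⟨hj1, hjv, hdvd⟩ := hvfacts j hj
      have hv0 : 0 < v := by omega
      have hjN : 0 < j * N₀ := by positivity
      have hvle : v ≤ j * N₀ := Nat.le_of_dvd hjN hdvd
      rw [Finset.mem_Icc]
      constructor
      · rw [Nat.one_le_div_iff hv0]; exact hvle
      · calc j * N₀ / v ≤ v * N₀ / v := Nat.div_le_div_right (by exact Nat.mul_le_mul_right _ hjv)
          _ = N₀ := by rw [Nat.mul_div_cancel_left _ hv0]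
    have hinj : Set.InjOn (fun j => j * N₀ / v) (t.filter (fun j => D j = v)) := by
      intro j hj j' hj' heq
      simp only [Finset.coe_filter, Set.mem_setOf_eq] at hj hj'
      obtain ⟨hj1, hjv, hdvd⟩ := hvfacts j (Finset.mem_filter.2 ⟨hj.1, hj.2⟩)
      obtain ⟨hj1', hjv', hdvd'⟩ := hvfacts j' (Finset.mem_filter.2 ⟨hj'.1, hj'.2⟩)
      have e1 : j * N₀ / v * v = j * N₀ := Nat.div_mul_cancel hdvd
      have e2 : j' * N₀ / v * v = j' * N₀ := Nat.div_mul_cancel hdvd'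
      simp only at heq
      have : j * N₀ = j' * N₀ := by rw [← e1, ← e2, heq]
      exact Nat.eq_of_mul_eq_mul_right (by omega) this
    calc (t.filter (fun j => D j = v)).card ≤ (Finset.Icc 1 N₀).card :=
          Finset.card_le_card_of_injOn _ hmaps hinj
      _ = N₀ := by rw [Nat.card_Icc]; omega
  have h2 : (t.image D).card ≤ autGrowth (S : Set G) R := by
    rw [autGrowth]
    refine le_ncard_image_quotient _ _ (wordBall_finite S R) (t.image D)
      (fun v => if h : ∃ j, j ∈ t ∧ D j = v then a ^ h.choose else 1) ?_ ?_
    · intro v hv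
      obtain ⟨j0, hj0, hDj0⟩ := Finset.mem_image.1 hv
      have hex : ∃ j, j ∈ t ∧ D j = v := ⟨j0, hj0, hDj0⟩
      show (if h : ∃ j, j ∈ t ∧ D j = v then a ^ h.choose else 1) ∈ wordBall (S : Set G) R
      rw [dif_pos hex]
      have hj := hex.choose_spec
      have hball : a ^ hex.choose ∈ wordBall (S : Set G) (hex.choose * La) :=
        pow_mem_wordBall hLa hex.choose
      refine wordBall_mono (S : Set G) ?_ hball
      have hle : hex.choose ≤ n := (Finset.mem_Icc.1 hj.1).2
      calc hex.choose * La ≤ n * La := Nat.mul_le_mul_right _ hle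
        _ ≤ lam * n + lam := by rw [hlam]; nlinarith
    · intro v hv v' hv' hq
      simp only [Finset.coe_image, Set.mem_image, Finset.mem_coe] at hv hv'
      obtain ⟨j0, hj0, hDj0⟩ := hv
      obtain ⟨j0', hj0', hDj0'⟩ := hv'
      have hex : ∃ j, j ∈ t ∧ D j = v := ⟨j0, hj0, hDj0⟩
      have hex' : ∃ j, j ∈ t ∧ D j = v' := ⟨j0', hj0', hDj0'⟩
      simp only [dif_pos hex, dif_pos hex'] at hq
      obtain ⟨φ, hφ⟩ := (quotient_orbit_eq_iff _ _).1 hq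
      have : D hex.choose = D hex'.choose := by
        show ddiv (a ^ hex.choose) = ddiv (a ^ hex'.choose)
        rw [← hφ, ddiv_aut]
      rw [← hex.choose_spec.2, ← hex'.choose_spec.2, this]
  have hcard : t.card = n := by rw [hT, Nat.card_Icc]; omega
  calc n = t.card := hcard.symm
    _ ≤ N₀ * (t.image D).card := h1
    _ ≤ N₀ * autGrowth (S : Set G) R := Nat.mul_le_mul_left _ h2
    _ ≤ lam * autGrowth (S : Set G) (lam * n + lam) + lam := by
        rw [← hR]
        have : N₀ ≤ lam := by omega
        exact le_add_right (Nat.mul_le_mul_right _ this)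

end Lower

end Main


end AGL

/-- if `G` has a finite-index normal subgroup `A ≅ ℤ^m` (`m ≥ 1`) on which
every conjugation acts as the identity or inversion, according to a homomorphism
`sgn : G → {±1}`, then the automorphic growth of `G` is linear. -/
theorem automorphic_growth_linear_of_sgn {G : Type*} [Group G]
    (m : ℕ) (hm : 1 ≤ m) (A : Subgroup G) [A.Normal] [A.FiniteIndex]
    (e : A ≃* Multiplicative (Fin m → ℤ))
    (sgn : G →* ℤˣ) (hsgn : ∀ g x : G, x ∈ A → g⁻¹ * x * g = x ^ ((sgn g : ℤ))) :
    ∀ S : Finset G, Subgroup.closure (S : Set G) = ⊤ →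
      GrowthEquiv (autGrowth (S : Set G)) (fun n => n) := by
  intro S hS
  exact ⟨AGL.upper m A e sgn hm hsgn S, AGL.lower m A e hm S hS⟩
end

section
/- Let H(ℤ) be the discrete Heisenberg group, i.e. the group under matrix multiplication of 3×3 upper unitriangular integer matrices [[1,a,c],[0,1,b],[0,0,1]] with a,b,c ∈ ℤ. Then H(ℤ) is finitely generated, and for every finite generating set Σ of H(ℤ) one has α_{H(ℤ),Σ} ∼ (n ↦ n²); that is, the automorphic growth of the Heisenberg group is quadratic. -/
/-- A 3×3 integer matrix is upper unitriangular. -/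
def IsHeis (M : Matrix (Fin 3) (Fin 3) ℤ) : Prop :=
  M 0 0 = 1 ∧ M 1 1 = 1 ∧ M 2 2 = 1 ∧ M 1 0 = 0 ∧ M 2 0 = 0 ∧ M 2 1 = 0

/-- The discrete Heisenberg group: 3×3 upper unitriangular integer matrices
under matrix multiplication. -/
def Heisenberg : Type := {M : Matrix (Fin 3) (Fin 3) ℤ // IsHeis M}

namespace Heisenberg

theorem mul_mem {A B : Matrix (Fin 3) (Fin 3) ℤ} (hA : IsHeis A) (hB : IsHeis B) :
    IsHeis (A * B) := by
  obtain ⟨a1, a2, a3, a4, a5, a6⟩ := hA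
  obtain ⟨b1, b2, b3, b4, b5, b6⟩ := hB
  refine ⟨?_, ?_, ?_, ?_, ?_, ?_⟩ <;>
    simp [Matrix.mul_apply, Fin.sum_univ_three, a1, a2, a3, a4, a5, a6, b1, b2, b3, b4, b5, b6]

theorem one_mem : IsHeis (1 : Matrix (Fin 3) (Fin 3) ℤ) := by
  refine ⟨?_, ?_, ?_, ?_, ?_, ?_⟩ <;> simp [Matrix.one_apply]

def heisInv (A : Matrix (Fin 3) (Fin 3) ℤ) : Matrix (Fin 3) (Fin 3) ℤ :=
  !![1, -(A 0 1), A 0 1 * A 1 2 - A 0 2; 0, 1, -(A 1 2); 0, 0, 1]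

theorem inv_mem (A : Matrix (Fin 3) (Fin 3) ℤ) : IsHeis (heisInv A) := by
  refine ⟨?_, ?_, ?_, ?_, ?_, ?_⟩ <;> simp [heisInv, Matrix.vecHead, Matrix.vecTail]

theorem inv_mul (A : Matrix (Fin 3) (Fin 3) ℤ) (hA : IsHeis A) : heisInv A * A = 1 := by
  obtain ⟨a1, a2, a3, a4, a5, a6⟩ := hA
  ext i j
  fin_cases i <;> fin_cases j <;>
    simp [heisInv, Matrix.mul_apply, Fin.sum_univ_three, Matrix.one_apply,
      a1, a2, a3, a4, a5, a6] <;> ring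

/-- Matrix multiplication makes the set of unitriangular matrices a group. -/
instance : Group Heisenberg where
  mul A B := ⟨A.1 * B.1, mul_mem A.2 B.2⟩
  one := ⟨1, one_mem⟩
  inv A := ⟨heisInv A.1, inv_mem A.1⟩
  mul_assoc a b c := Subtype.ext (mul_assoc a.1 b.1 c.1)
  one_mul a := Subtype.ext (one_mul a.1)
  mul_one a := Subtype.ext (mul_one a.1)
  inv_mul_cancel a := Subtype.ext (inv_mul a.1 a.2)

end Heisenberg

namespace Heisenberg

/-- Coordinates embedding. -/
def e (a b c : ℤ) : Heisenberg :=
  ⟨!![1, a, c; 0, 1, b; 0, 0, 1], by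
    refine ⟨?_, ?_, ?_, ?_, ?_, ?_⟩ <;> simp [Matrix.vecHead, Matrix.vecTail]⟩

theorem e_mul (a b c a' b' c' : ℤ) :
    e a b c * e a' b' c' = e (a + a') (b + b') (c + c' + a * b') := by
  show (⟨_ * _, _⟩ : Heisenberg) = _
  apply Subtype.ext
  ext i j
  fin_cases i <;> fin_cases j <;>
    simp [e, Matrix.mul_apply, Fin.sum_univ_three, Matrix.vecHead, Matrix.vecTail] <;> ring

theorem e_one : e 0 0 0 = 1 := by
  apply Subtype.ext
  show _ = (1 : Matrix (Fin 3) (Fin 3) ℤ)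
  ext i j
  fin_cases i <;> fin_cases j <;> simp [e, Matrix.one_apply, Matrix.vecHead, Matrix.vecTail]

theorem e_inj {a b c a' b' c' : ℤ} (h : e a b c = e a' b' c') :
    a = a' ∧ b = b' ∧ c = c' := by
  have h1 := congrArg (fun g : Heisenberg => g.1 0 1) h
  have h2 := congrArg (fun g : Heisenberg => g.1 1 2) h
  have h3 := congrArg (fun g : Heisenberg => g.1 0 2) h
  simp [e] at h1 h2 h3
  exact ⟨h1, h2, h3⟩

theorem e_surj (g : Heisenberg) : ∃ a b c : ℤ, g = e a b c := by
  refine ⟨g.1 0 1, g.1 1 2, g.1 0 2, ?_⟩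
  obtain ⟨M, h1, h2, h3, h4, h5, h6⟩ := g
  apply Subtype.ext
  ext i j
  fin_cases i <;> fin_cases j <;> simp [e, h1, h2, h3, h4, h5, h6, Matrix.vecHead, Matrix.vecTail]

theorem e_inv (a b c : ℤ) : (e a b c)⁻¹ = e (-a) (-b) (a * b - c) := by
  apply Subtype.ext
  show heisInv _ = _
  ext i j
  fin_cases i <;> fin_cases j <;> simp [e, heisInv, Matrix.vecHead, Matrix.vecTail]

end Heisenberg
namespace Heisenberg

theorem e_zpow (m c : ℤ) : (e 0 0 c) ^ m = e 0 0 (c * m) := by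
  induction m using Int.induction_on with
  | zero => simpa using e_one.symm
  | succ k ih => rw [zpow_add_one, ih, e_mul]; ring_nf
  | pred k ih =>
      rw [zpow_sub_one, ih, e_inv, e_mul]; ring_nf

theorem x_zpow (m : ℤ) : (e 1 0 0) ^ m = e m 0 0 := by
  induction m using Int.induction_on with
  | zero => simpa using e_one.symm
  | succ k ih => rw [zpow_add_one, ih, e_mul]; ring_nf
  | pred k ih => rw [zpow_sub_one, ih, e_inv, e_mul]; ring_nf

theorem y_zpow (m : ℤ) : (e 0 1 0) ^ m = e 0 m 0 := by
  induction m using Int.induction_on with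
  | zero => simpa using e_one.symm
  | succ k ih => rw [zpow_add_one, ih, e_mul]; ring_nf
  | pred k ih => rw [zpow_sub_one, ih, e_inv, e_mul]; ring_nf

theorem e_factor (a b c : ℤ) :
    e a b c = (e 1 0 0) ^ a * (e 0 1 0) ^ b * (e 0 0 1) ^ (c - a * b) := by
  rw [x_zpow, y_zpow, e_zpow, e_mul, e_mul]
  ring_nf

/-- Triangular-number helper. -/
def T (b : ℤ) : ℤ := (b ^ 2 + b) / 2

theorem two_T (b : ℤ) : 2 * T b = b ^ 2 + b := by
  have h : (2 : ℤ) ∣ b ^ 2 + b := by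
    have := Int.even_mul_succ_self b
    rcases this with ⟨k, hk⟩
    exact ⟨k, by nlinarith⟩
  exact Int.mul_ediv_cancel' h

theorem T_add (b b' : ℤ) : T (b + b') = T b + T b' + b * b' := by
  have h : 2 * T (b + b') = 2 * (T b + T b' + b * b') := by
    rw [two_T, mul_add, mul_add, two_T, two_T]; ring
  exact mul_left_cancel₀ two_ne_zero h

/-- Coordinate projections. -/
def cA (g : Heisenberg) : ℤ := g.1 0 1
def cB (g : Heisenberg) : ℤ := g.1 1 2
def cC (g : Heisenberg) : ℤ := g.1 0 2

theorem cA_e (a b c : ℤ) : cA (e a b c) = a := by simp [cA, e]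
theorem cB_e (a b c : ℤ) : cB (e a b c) = b := by
  simp [cB, e, Matrix.vecHead, Matrix.vecTail]
theorem cC_e (a b c : ℤ) : cC (e a b c) = c := by
  simp [cC, e, Matrix.vecHead, Matrix.vecTail]

/-- Build an automorphism from a coordinate recipe. -/
def mkAut (f g : ℤ → ℤ → ℤ → ℤ × ℤ × ℤ)
    (hfg : ∀ a b c, (fun p : ℤ×ℤ×ℤ => g p.1 p.2.1 p.2.2) (f a b c) = (a, b, c))
    (hgf : ∀ a b c, (fun p : ℤ×ℤ×ℤ => f p.1 p.2.1 p.2.2) (g a b c) = (a, b, c))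
    (hmul : ∀ a b c a' b' c',
      (e (f a b c).1 (f a b c).2.1 (f a b c).2.2) *
        (e (f a' b' c').1 (f a' b' c').2.1 (f a' b' c').2.2) =
      e (f (a+a') (b+b') (c + c' + a*b')).1 (f (a+a') (b+b') (c + c' + a*b')).2.1
        (f (a+a') (b+b') (c + c' + a*b')).2.2) :
    MulAut Heisenberg where
  toFun x := e (f (cA x) (cB x) (cC x)).1 (f (cA x) (cB x) (cC x)).2.1 (f (cA x) (cB x) (cC x)).2.2
  invFun x := e (g (cA x) (cB x) (cC x)).1 (g (cA x) (cB x) (cC x)).2.1 (g (cA x) (cB x) (cC x)).2.2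
  left_inv x := by
    obtain ⟨a, b, c, rfl⟩ := e_surj x
    have := hfg a b c
    simp only [cA_e, cB_e, cC_e]
    rw [show g (f a b c).1 (f a b c).2.1 (f a b c).2.2 = (a,b,c) from this]
  right_inv x := by
    obtain ⟨a, b, c, rfl⟩ := e_surj x
    have := hgf a b c
    simp only [cA_e, cB_e, cC_e]
    rw [show f (g a b c).1 (g a b c).2.1 (g a b c).2.2 = (a,b,c) from this]
  map_mul' x y := by
    obtain ⟨a, b, c, rfl⟩ := e_surj x
    obtain ⟨a', b', c', rfl⟩ := e_surj y
    simp only [cA_e, cB_e, cC_e]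
    rw [e_mul]
    simp only [cA_e, cB_e, cC_e]
    exact (hmul a b c a' b' c').symm

theorem mkAut_apply_e (f g hfg hgf hmul) (a b c : ℤ) :
    mkAut f g hfg hgf hmul (e a b c)
      = e (f a b c).1 (f a b c).2.1 (f a b c).2.2 := by
  show e (f (cA _) (cB _) (cC _)).1 _ _ = _
  rw [cA_e, cB_e, cC_e]

end Heisenberg
namespace Heisenberg

theorem e_congr {a b c a' b' c' : ℤ} (h1 : a = a') (h2 : b = b') (h3 : c = c') :
    e a b c = e a' b' c' := by rw [h1, h2, h3]

/-- The swap automorphism. -/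
def autSwap : MulAut Heisenberg :=
  mkAut (fun a b c => (b, a, a * b - c)) (fun a b c => (b, a, a * b - c))
    (by intro a b c; simp; ring)
    (by intro a b c; simp; ring)
    (by intro a b c a' b' c'; simp only [e_mul]; exact e_congr (by ring) (by ring) (by ring))

theorem autSwap_e (a b c : ℤ) : autSwap (e a b c) = e b a (a * b - c) :=
  mkAut_apply_e _ _ _ _ _ a b c

/-- The negation automorphism. -/
def autNeg : MulAut Heisenberg :=
  mkAut (fun a b c => (a, -b, -c)) (fun a b c => (a, -b, -c))
    (by intro a b c; simp)
    (by intro a b c; simp)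
    (by intro a b c a' b' c'; simp only [e_mul]; exact e_congr (by ring) (by ring) (by ring))

theorem autNeg_e (a b c : ℤ) : autNeg (e a b c) = e a (-b) (-c) :=
  mkAut_apply_e _ _ _ _ _ a b c

/-- The transvection automorphism `x ↦ x, y ↦ x^k y`-ish on coordinates. -/
def autTrans (k : ℤ) : MulAut Heisenberg :=
  mkAut (fun a b c => (a + k * b, b, c + k * T b)) (fun a b c => (a - k * b, b, c - k * T b))
    (by intro a b c; simp)
    (by intro a b c; simp)
    (by intro a b c a' b' c'
        simp only [e_mul]
        exact e_congr (by ring) (by ring) (by rw [T_add]; ring))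

theorem autTrans_e (k a b c : ℤ) :
    autTrans k (e a b c) = e (a + k * b) b (c + k * T b) :=
  mkAut_apply_e _ _ _ _ _ a b c

/-- The shear automorphism `x ↦ x z^l`. -/
def autShear (l : ℤ) : MulAut Heisenberg :=
  mkAut (fun a b c => (a, b, c + l * a)) (fun a b c => (a, b, c - l * a))
    (by intro a b c; simp)
    (by intro a b c; simp)
    (by intro a b c a' b' c'; simp only [e_mul]; exact e_congr (by ring) (by ring) (by ring))

theorem autShear_e (l a b c : ℤ) : autShear l (e a b c) = e a b (c + l * a) :=
  mkAut_apply_e _ _ _ _ _ a b c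

/-- Same-orbit relation under `MulAut`. -/
def osim (g h : Heisenberg) : Prop :=
  Quotient.mk (MulAction.orbitRel (MulAut Heisenberg) Heisenberg) g =
    Quotient.mk (MulAction.orbitRel (MulAut Heisenberg) Heisenberg) h

theorem osim_refl (g : Heisenberg) : osim g g := rfl

theorem osim_trans {g h k : Heisenberg} (h1 : osim g h) (h2 : osim h k) : osim g k :=
  h1.trans h2

theorem osim_apply (φ : MulAut Heisenberg) (g : Heisenberg) : osim g (φ g) := by
  apply Quotient.sound
  exact ⟨φ⁻¹, by simp [MulAut.smul_def]⟩

end Heisenberg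
namespace Heisenberg

theorem osim_negc (a c : ℤ) : osim (e a 0 c) (e (-a) 0 (-c)) := by
  have s1 := osim_apply autSwap (e a 0 c)
  rw [autSwap_e] at s1
  have s2 := osim_apply autNeg (e 0 a (a * 0 - c))
  rw [autNeg_e] at s2
  have s3 := osim_apply autSwap (e 0 (-a) (-(a * 0 - c)))
  rw [autSwap_e] at s3
  refine osim_trans s1 (osim_trans s2 (osim_trans s3 ?_))
  exact congrArg _ (e_congr rfl rfl (by ring))

theorem euclid_base (a c : ℤ) (ha : a ≠ 0) :
    ∃ d c₁ : ℤ, 0 < d ∧ d ≤ max |a| |0| ∧ osim (e a 0 c) (e d 0 c₁) := by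
  rcases lt_or_gt_of_ne ha with hneg | hpos
  · exact ⟨-a, -c, by omega, by rw [abs_of_neg hneg]; exact le_max_left _ _, osim_negc a c⟩
  · exact ⟨a, c, hpos, by rw [abs_of_pos hpos]; exact le_max_left _ _, osim_refl _⟩

theorem euclid : ∀ (n : ℕ) (a b c : ℤ), b.natAbs ≤ n → (a ≠ 0 ∨ b ≠ 0) →
    ∃ d c₁ : ℤ, 0 < d ∧ d ≤ max |a| |b| ∧ osim (e a b c) (e d 0 c₁) := by
  intro n
  induction n with
  | zero =>
      intro a b c hb hab
      have hb0 : b = 0 := by omega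
      subst hb0
      exact euclid_base a c (by tauto)
  | succ n ih =>
      intro a b c hb hab
      by_cases hb0 : b = 0
      · subst hb0
        exact euclid_base a c (by tauto)
      · set k := -(a / b) with hk
        have hrab : a + k * b = a % b := by rw [hk, Int.emod_def]; ring
        have hrnn : 0 ≤ a % b := Int.emod_nonneg a hb0
        have hrlt : a % b < |b| := by rw [Int.abs_eq_natAbs]; exact Int.emod_lt a hb0
        have s1 := osim_apply (autTrans k) (e a b c)
        rw [autTrans_e, hrab] at s1
        have s2 := osim_apply autSwap (e (a % b) b (c + k * T b))
        rw [autSwap_e] at s2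
        have e1 : ((a % b).natAbs : ℤ) = a % b := Int.natAbs_of_nonneg hrnn
        have e2 : ((b.natAbs : ℕ) : ℤ) = |b| := (Int.abs_eq_natAbs b).symm
        have hnat : (a % b).natAbs ≤ n := by omega
        obtain ⟨d, c₁, hd, hdle, hsim⟩ :=
          ih b (a % b) ((a % b) * b - (c + k * T b)) hnat (Or.inl hb0)
        refine ⟨d, c₁, hd, ?_, osim_trans s1 (osim_trans s2 hsim)⟩
        have hble : |b| ≤ max |a| |b| := le_max_right _ _
        have hrle : |a % b| ≤ |b| := by
          rw [abs_of_nonneg hrnn]; omega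
        exact hdle.trans (max_le hble (hrle.trans hble))

end Heisenberg
namespace Heisenberg

theorem orbit_rep (n : ℕ) (a b c : ℤ) (ha : |a| ≤ (n:ℤ)) (hb : |b| ≤ (n:ℤ))
    (hc : |c| ≤ (n:ℤ)^2) :
    ∃ d c' : ℤ, osim (e a b c) (e d 0 c') ∧
      ((d = 0 ∧ 0 ≤ c' ∧ c' ≤ (n:ℤ)^2) ∨ (1 ≤ d ∧ d ≤ (n:ℤ) ∧ 0 ≤ c' ∧ c' ≤ (n:ℤ))) := by
  obtain ⟨hc1, hc2⟩ := abs_le.mp hc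
  by_cases hcen : a = 0 ∧ b = 0
  · obtain ⟨rfl, rfl⟩ := hcen
    rcases le_or_gt 0 c with hc0 | hc0
    · exact ⟨0, c, osim_refl _, Or.inl ⟨rfl, hc0, by omega⟩⟩
    · refine ⟨0, -c, ?_, Or.inl ⟨rfl, by omega, by omega⟩⟩
      have s := osim_apply autNeg (e 0 0 c)
      rw [autNeg_e] at s
      refine osim_trans s (congrArg _ (e_congr rfl (by ring) rfl))
  · have hab : a ≠ 0 ∨ b ≠ 0 := by tauto
    obtain ⟨d, c₁, hd, hdle, hsim⟩ := euclid b.natAbs a b c le_rfl hab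
    have hdn : d ≤ (n:ℤ) := hdle.trans (max_le ha hb)
    set l := -(c₁ / d) with hl
    have s := osim_apply (autShear l) (e d 0 c₁)
    rw [autShear_e] at s
    have hmod : c₁ + l * d = c₁ % d := by rw [hl, Int.emod_def]; ring
    rw [hmod] at s
    refine ⟨d, c₁ % d, osim_trans hsim s, Or.inr ⟨hd, hdn, Int.emod_nonneg c₁ (by omega), ?_⟩⟩
    have := Int.emod_lt_of_pos c₁ hd
    omega

instance : DecidableEq Heisenberg :=
  fun a b => decidable_of_iff (a.1 = b.1) ⟨Subtype.ext, fun h => congrArg _ h⟩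

/-- The standard generating set. -/
def S₀ : Finset Heisenberg := {e 1 0 0, e 0 1 0}

theorem letter_cases {w : Heisenberg} (hw : w ∈ (S₀ : Set Heisenberg) ∨ w⁻¹ ∈ (S₀ : Set Heisenberg)) :
    ∃ a b : ℤ, |a| ≤ 1 ∧ |b| ≤ 1 ∧ w = e a b 0 := by
  have hx : (e 1 0 0)⁻¹ = e (-1) 0 0 := by
    rw [e_inv]; exact e_congr rfl (by ring) (by ring)
  have hy : (e 0 1 0)⁻¹ = e 0 (-1) 0 := by
    rw [e_inv]; exact e_congr rfl rfl (by ring)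
  simp only [S₀, Finset.coe_insert, Finset.coe_singleton, Set.mem_insert_iff,
    Set.mem_singleton_iff] at hw
  rcases hw with (rfl | rfl) | h | h
  · exact ⟨1, 0, by norm_num⟩
  · exact ⟨0, 1, by norm_num⟩
  · exact ⟨-1, 0, by norm_num, by norm_num, by rw [← inv_inv w, h, hx]⟩
  · exact ⟨0, -1, by norm_num, by norm_num, by rw [← inv_inv w, h, hy]⟩

theorem prod_bound : ∀ l : List Heisenberg,
    (∀ w ∈ l, ∃ a b : ℤ, |a| ≤ 1 ∧ |b| ≤ 1 ∧ w = e a b 0) →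
    ∃ a b c : ℤ, |a| ≤ (l.length : ℤ) ∧ |b| ≤ (l.length : ℤ) ∧
      |c| ≤ (l.length : ℤ)^2 ∧ l.prod = e a b c := by
  intro l
  induction l with
  | nil => exact fun _ => ⟨0, 0, 0, by norm_num, by norm_num, by norm_num, e_one.symm⟩
  | cons w t ih =>
      intro hl
      obtain ⟨a₀, b₀, ha₀, hb₀, hw⟩ := hl w List.mem_cons_self
      obtain ⟨a, b, c, ha, hb, hc, hp⟩ := ih fun x hx => hl x (List.mem_cons_of_mem w hx)
      refine ⟨a₀ + a, b₀ + b, c + a₀ * b, ?_, ?_, ?_, ?_⟩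
      · simp only [List.length_cons]; push_cast
        calc |a₀ + a| ≤ |a₀| + |a| := abs_add_le _ _
          _ ≤ (t.length : ℤ) + 1 := by omega
      · simp only [List.length_cons]; push_cast
        calc |b₀ + b| ≤ |b₀| + |b| := abs_add_le _ _
          _ ≤ (t.length : ℤ) + 1 := by omega
      · simp only [List.length_cons]; push_cast
        calc |c + a₀ * b| ≤ |c| + |a₀| * |b| := by
              refine (abs_add_le _ _).trans ?_
              rw [abs_mul]
          _ ≤ (t.length : ℤ)^2 + 1 * (t.length : ℤ) := by
              have h1 : |a₀| * |b| ≤ 1 * (t.length : ℤ) := by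
                apply mul_le_mul ha₀ hb (abs_nonneg _) zero_le_one
              omega
          _ ≤ ((t.length : ℤ) + 1)^2 := by nlinarith [Int.natCast_nonneg t.length]
      · rw [List.prod_cons, hw, hp, e_mul]
        exact e_congr rfl rfl (by ring)

theorem ball_bound {g : Heisenberg} {n : ℕ} (hg : g ∈ wordBall (S₀ : Set Heisenberg) n) :
    ∃ a b c : ℤ, |a| ≤ (n:ℤ) ∧ |b| ≤ (n:ℤ) ∧ |c| ≤ (n:ℤ)^2 ∧ g = e a b c := by
  obtain ⟨l, hmem, hlen, hprod⟩ := hg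
  obtain ⟨a, b, c, ha, hb, hc, hp⟩ := prod_bound l fun w hw => letter_cases (hmem w hw)
  have hln : (l.length : ℤ) ≤ (n : ℤ) := by exact_mod_cast hlen
  exact ⟨a, b, c, ha.trans hln, hb.trans hln, hc.trans (by nlinarith [Int.natCast_nonneg l.length]), by rw [← hprod, hp]⟩

end Heisenberg
namespace Heisenberg

open Finset in
/-- Representative parameter set. -/
noncomputable def Pn (n : ℕ) : Finset (ℤ × ℤ) :=
  (Finset.Icc (1:ℤ) (n:ℤ) ×ˢ Finset.Icc (0:ℤ) (n:ℤ)) ∪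
    ({(0:ℤ)} ×ˢ Finset.Icc (0:ℤ) ((n:ℤ)^2))

theorem card_Pn (n : ℕ) : (Pn n).card ≤ 3 * (n+1)^2 := by
  have h1 : (Finset.Icc (1:ℤ) (n:ℤ)).card = n := by
    rw [Int.card_Icc]; omega
  have h2 : (Finset.Icc (0:ℤ) (n:ℤ)).card = n + 1 := by
    rw [Int.card_Icc]; omega
  have h3 : (Finset.Icc (0:ℤ) ((n:ℤ)^2)).card = n^2 + 1 := by
    rw [Int.card_Icc]
    have : ((n:ℤ))^2 = ((n^2 : ℕ) : ℤ) := by push_cast; ring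
    omega
  calc (Pn n).card ≤ _ + _ := Finset.card_union_le _ _
    _ ≤ 3 * (n+1)^2 := by
        rw [Finset.card_product, Finset.card_product, h1, h2, h3, Finset.card_singleton]
        nlinarith [Nat.zero_le n]

theorem upper (n : ℕ) : autGrowth (S₀ : Set Heisenberg) n ≤ 3 * (n+1)^2 := by
  classical
  have hsub : Quotient.mk (MulAction.orbitRel (MulAut Heisenberg) Heisenberg) ''
      wordBall (S₀ : Set Heisenberg) n ⊆
      Quotient.mk (MulAction.orbitRel (MulAut Heisenberg) Heisenberg) ''
        ((fun p : ℤ × ℤ => e p.1 0 p.2) '' ↑(Pn n)) := by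
    rintro _ ⟨g, hg, rfl⟩
    obtain ⟨a, b, c, ha, hb, hc, rfl⟩ := ball_bound hg
    obtain ⟨d, c', hsim, hcase⟩ := orbit_rep n a b c ha hb hc
    refine ⟨e d 0 c', ⟨(d, c'), ?_, rfl⟩, hsim.symm⟩
    rcases hcase with ⟨rfl, h1, h2⟩ | ⟨h1, h2, h3, h4⟩
    · refine Finset.mem_union_right _ ?_
      rw [Finset.mem_product]
      exact ⟨Finset.mem_singleton_self _, Finset.mem_Icc.mpr ⟨h1, h2⟩⟩
    · refine Finset.mem_union_left _ ?_
      rw [Finset.mem_product]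
      exact ⟨Finset.mem_Icc.mpr ⟨h1, h2⟩, Finset.mem_Icc.mpr ⟨h3, h4⟩⟩
  have hfin1 : ((fun p : ℤ × ℤ => e p.1 0 p.2) '' ↑(Pn n)).Finite :=
    (Pn n).finite_toSet.image _
  calc autGrowth (S₀ : Set Heisenberg) n
      ≤ (Quotient.mk (MulAction.orbitRel (MulAut Heisenberg) Heisenberg) ''
          ((fun p : ℤ × ℤ => e p.1 0 p.2) '' ↑(Pn n))).ncard :=
        Set.ncard_le_ncard hsub (hfin1.image _)
    _ ≤ ((fun p : ℤ × ℤ => e p.1 0 p.2) '' ↑(Pn n)).ncard := Set.ncard_image_le hfin1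
    _ ≤ (↑(Pn n) : Set (ℤ × ℤ)).ncard := Set.ncard_image_le (Pn n).finite_toSet
    _ = (Pn n).card := Set.ncard_coe_finset _
    _ ≤ 3 * (n+1)^2 := card_Pn n

end Heisenberg
section WordBallLemmas

variable {G : Type*} [Group G] {S : Set G}

theorem one_mem_wordBall (n : ℕ) : (1 : G) ∈ wordBall S n :=
  ⟨[], by simp, by simp, rfl⟩

theorem wordBall_mono {n m : ℕ} (h : n ≤ m) : wordBall S n ⊆ wordBall S m := by
  rintro g ⟨l, h1, h2, h3⟩
  exact ⟨l, h1, h2.trans h, h3⟩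

theorem mul_mem_wordBall {g h : G} {n m : ℕ} (hg : g ∈ wordBall S n)
    (hh : h ∈ wordBall S m) : g * h ∈ wordBall S (n + m) := by
  obtain ⟨l1, ha1, hb1, hc1⟩ := hg
  obtain ⟨l2, ha2, hb2, hc2⟩ := hh
  refine ⟨l1 ++ l2, ?_, ?_, ?_⟩
  · intro x hx
    rcases List.mem_append.mp hx with h | h
    exacts [ha1 x h, ha2 x h]
  · rw [List.length_append]; omega
  · rw [List.prod_append, hc1, hc2]

theorem inv_mem_wordBall {g : G} {n : ℕ} (hg : g ∈ wordBall S n) :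
    g⁻¹ ∈ wordBall S n := by
  obtain ⟨l, ha, hb, hc⟩ := hg
  refine ⟨(l.map fun x => x⁻¹).reverse, ?_, ?_, ?_⟩
  · intro x hx
    rw [List.mem_reverse, List.mem_map] at hx
    obtain ⟨y, hy, rfl⟩ := hx
    rcases ha y hy with h | h
    · exact Or.inr (by simpa using h)
    · exact Or.inl h
  · rw [List.length_reverse, List.length_map]; exact hb
  · rw [← List.prod_inv_reverse, hc]

theorem mem_wordBall_self {s : G} (hs : s ∈ S) : s ∈ wordBall S 1 :=
  ⟨[s], by simpa using Or.inl hs, by simp, by simp⟩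

theorem pow_mem_wordBall {g : G} {n : ℕ} (hg : g ∈ wordBall S n) (k : ℕ) :
    g ^ k ∈ wordBall S (k * n) := by
  induction k with
  | zero => simpa using one_mem_wordBall 0
  | succ k ih =>
      have := mul_mem_wordBall ih hg
      rw [← pow_succ] at this
      have hle : k * n + n ≤ (k+1) * n := by ring_nf; omega
      exact wordBall_mono hle this

theorem wordBall_finite (hS : S.Finite) : ∀ n : ℕ, (wordBall S n).Finite := by
  intro n
  induction n with
  | zero =>
      apply Set.Finite.subset (Set.finite_singleton (1 : G))
      rintro g ⟨l, ha, hb, hc⟩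
      have : l = [] := List.eq_nil_of_length_eq_zero (by omega)
      subst this
      simp at hc
      simp [← hc]
  | succ n ih =>
      have hK : (S ∪ (fun x : G => x⁻¹) '' S).Finite := hS.union (hS.image _)
      apply Set.Finite.subset (ih.union (Set.Finite.biUnion hK
        (fun s _ => ih.image (fun x => s * x))))
      rintro g ⟨l, ha, hb, hc⟩
      match l with
      | [] =>
          left
          simp at hc
          rw [← hc]
          exact one_mem_wordBall n
      | w :: t =>
          right
          have hwK : w ∈ S ∪ (fun x : G => x⁻¹) '' S := by
            rcases ha w List.mem_cons_self with h | h
            · exact Or.inl h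
            · exact Or.inr ⟨w⁻¹, h, inv_inv w⟩
          refine Set.mem_biUnion hwK
            ⟨t.prod, ⟨t, fun x hx => ha x (List.mem_cons_of_mem w hx), ?_, rfl⟩, ?_⟩
          · simp at hb; omega
          · rw [← hc, List.prod_cons]

theorem autGrowth_mono {n m : ℕ} (hS : S.Finite) (h : n ≤ m) :
    autGrowth S n ≤ autGrowth S m :=
  Set.ncard_le_ncard (Set.image_mono (wordBall_mono h))
    ((wordBall_finite hS m).image _)

end WordBallLemmas
namespace Heisenberg

theorem aut_z (φ : MulAut Heisenberg) : ∃ m : ℤ, φ (e 0 0 1) = e 0 0 m := by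
  obtain ⟨a, b, c, hφ⟩ := e_surj (φ (e 0 0 1))
  have hcen : ∀ h : Heisenberg, e a b c * h = h * e a b c := by
    intro h
    have hz : ∀ w : Heisenberg, e 0 0 1 * w = w * e 0 0 1 := by
      intro w
      obtain ⟨a', b', c', rfl⟩ := e_surj w
      rw [e_mul, e_mul]
      exact e_congr (by ring) (by ring) (by ring)
    calc e a b c * h = φ (e 0 0 1) * φ (φ.symm h) := by rw [← hφ, MulEquiv.apply_symm_apply]
      _ = φ (e 0 0 1 * φ.symm h) := (map_mul φ _ _).symm
      _ = φ (φ.symm h * e 0 0 1) := by rw [hz]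
      _ = φ (φ.symm h) * φ (e 0 0 1) := map_mul φ _ _
      _ = h * e a b c := by rw [MulEquiv.apply_symm_apply, hφ]
  have hx := hcen (e 1 0 0)
  rw [e_mul, e_mul] at hx
  obtain ⟨_, _, hx3⟩ := e_inj hx
  have hy := hcen (e 0 1 0)
  rw [e_mul, e_mul] at hy
  obtain ⟨_, _, hy3⟩ := e_inj hy
  have hb : b = 0 := by linarith
  have ha : a = 0 := by linarith
  exact ⟨c, by rw [hφ, ha, hb]⟩

theorem aut_central (φ : MulAut Heisenberg) (k : ℤ) :
    φ (e 0 0 k) = e 0 0 k ∨ φ (e 0 0 k) = e 0 0 (-k) := by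
  obtain ⟨m, hm⟩ := aut_z φ
  obtain ⟨j, hj⟩ := aut_z φ.symm
  have hmj : m * j = 1 := by
    have : φ (e 0 0 j) = e 0 0 (m * j) := by
      rw [show (e 0 0 j) = (e 0 0 1) ^ j by rw [e_zpow, one_mul], map_zpow, hm, e_zpow]
    have h2 : φ (φ.symm (e 0 0 1)) = e 0 0 1 := MulEquiv.apply_symm_apply _ _
    rw [hj, this] at h2
    exact (e_inj h2).2.2
  have hφk : φ (e 0 0 k) = e 0 0 (m * k) := by
    rw [show (e 0 0 k) = (e 0 0 1) ^ k by rw [e_zpow, one_mul], map_zpow, hm, e_zpow]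
  rcases Int.isUnit_iff.mp (IsUnit.of_mul_eq_one j hmj) with h1 | h1
  · left; rw [hφk, h1, one_mul]
  · right; rw [hφk, h1]; exact e_congr rfl rfl (by ring)

theorem central_distinct {j k : ℕ} (h : osim (e 0 0 (j:ℤ)) (e 0 0 (k:ℤ))) : j = k := by
  obtain ⟨φ, hφ⟩ := MulAction.mem_orbit_iff.mp
    (MulAction.orbitRel_apply.mp (Quotient.exact h))
  rw [MulAut.smul_def] at hφ
  rcases aut_central φ k with h1 | h1 <;> rw [h1] at hφ
  · exact_mod_cast ((e_inj hφ).2.2).symm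
  · have := (e_inj hφ).2.2
    omega

theorem z_mem_ball (n k : ℕ) (hn : 1 ≤ n) (hk : k ≤ n^2) :
    e 0 0 (k:ℤ) ∈ wordBall (S₀ : Set Heisenberg) (6*n) := by
  set x := e 1 0 0 with hxdef
  set y := e 0 1 0 with hydef
  have hxS : x ∈ (S₀ : Set Heisenberg) := by simp [S₀, hxdef]
  have hyS : y ∈ (S₀ : Set Heisenberg) := by simp [S₀, hydef]
  set q := k / n with hq
  set r := k % n with hr
  have hqn : q ≤ n := by
    have := Nat.div_le_div_right (c := n) hk
    rwa [pow_two, Nat.mul_div_cancel _ (by omega)] at this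
  have hrn : r < n := Nat.mod_lt _ (by omega)
  have hknr : n * q + r = k := Nat.div_add_mod k n
  -- powers
  have hxq : x ^ q = e (q:ℤ) 0 0 := by
    rw [hxdef, ← zpow_natCast, x_zpow]
  have hyn : y ^ n = e 0 (n:ℤ) 0 := by
    rw [hydef, ← zpow_natCast, y_zpow]
  have hyr : y ^ r = e 0 (r:ℤ) 0 := by
    rw [hydef, ← zpow_natCast, y_zpow]
  -- the witness product
  have key : e 0 0 (k:ℤ) =
      x ^ q * y ^ n * (x ^ q)⁻¹ * (y ^ n)⁻¹ * (x * y ^ r * x⁻¹ * (y ^ r)⁻¹) := by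
    rw [hxq, hyn, hyr, hxdef, e_inv, e_inv, e_inv, e_inv]
    rw [e_mul, e_mul, e_mul, e_mul, e_mul, e_mul, e_mul]
    refine (e_congr (by ring) (by ring) ?_).symm
    have hcast : (n:ℤ) * q + r = k := by exact_mod_cast hknr
    push_cast
    linear_combination hcast
  rw [key]
  have m1 : x ∈ wordBall (S₀ : Set Heisenberg) 1 := mem_wordBall_self hxS
  have m2 : y ∈ wordBall (S₀ : Set Heisenberg) 1 := mem_wordBall_self hyS
  have bxq : x ^ q ∈ wordBall (S₀ : Set Heisenberg) (q * 1) := pow_mem_wordBall m1 q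
  have byn : y ^ n ∈ wordBall (S₀ : Set Heisenberg) (n * 1) := pow_mem_wordBall m2 n
  have byr : y ^ r ∈ wordBall (S₀ : Set Heisenberg) (r * 1) := pow_mem_wordBall m2 r
  have total := mul_mem_wordBall (mul_mem_wordBall (mul_mem_wordBall
      (mul_mem_wordBall bxq byn) (inv_mem_wordBall bxq)) (inv_mem_wordBall byn))
    (mul_mem_wordBall (mul_mem_wordBall (mul_mem_wordBall m1 byr)
      (inv_mem_wordBall m1)) (inv_mem_wordBall byr))
  apply wordBall_mono (show q*1 + n*1 + q*1 + n*1 + (1 + r*1 + 1 + r*1) ≤ 6*n by omega) total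

theorem lower (n : ℕ) : n^2 ≤ autGrowth (S₀ : Set Heisenberg) (6*n + 6) := by
  classical
  set Q := Quotient.mk (MulAction.orbitRel (MulAut Heisenberg) Heisenberg) with hQ
  set A := (fun k : ℕ => Q (e 0 0 (k:ℤ))) '' ↑(Finset.range (n^2+1)) with hA
  have hsub : A ⊆ Q '' wordBall (S₀ : Set Heisenberg) (6*n+6) := by
    rintro _ ⟨k, hk, rfl⟩
    simp only [Finset.coe_range, Set.mem_Iio] at hk
    refine ⟨e 0 0 (k:ℤ), ?_, rfl⟩
    have h0 : k ≤ n^2 := by omega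
    have h1 : k ≤ (n+1)^2 := h0.trans (Nat.pow_le_pow_left (by omega) 2)
    have := z_mem_ball (n+1) k (by omega) h1
    exact wordBall_mono (by omega) this
  have hinj : Set.InjOn (fun k : ℕ => Q (e 0 0 (k:ℤ))) ↑(Finset.range (n^2+1)) :=
    fun j _ k _ h => central_distinct h
  have hcard : A.ncard = n^2 + 1 := by
    rw [hA, Set.ncard_image_of_injOn hinj, Set.ncard_coe_finset, Finset.card_range]
  have hfin : (Q '' wordBall (S₀ : Set Heisenberg) (6*n+6)).Finite :=
    ((wordBall_finite (S₀ : Finset Heisenberg).finite_toSet (6*n+6)).image _)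
  have := Set.ncard_le_ncard hsub hfin
  rw [hcard] at this
  calc n^2 ≤ n^2 + 1 := by omega
    _ ≤ _ := this

end Heisenberg
namespace Heisenberg

theorem closure_S₀ : Subgroup.closure (S₀ : Set Heisenberg) = ⊤ := by
  rw [eq_top_iff]
  intro g _
  obtain ⟨a, b, c, rfl⟩ := e_surj g
  have hx : e 1 0 0 ∈ Subgroup.closure (S₀ : Set Heisenberg) :=
    Subgroup.subset_closure (by simp [S₀])
  have hy : e 0 1 0 ∈ Subgroup.closure (S₀ : Set Heisenberg) :=
    Subgroup.subset_closure (by simp [S₀])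
  have hzeq : e 0 0 1 = e 1 0 0 * e 0 1 0 * (e 1 0 0)⁻¹ * (e 0 1 0)⁻¹ := by
    rw [e_inv, e_inv, e_mul, e_mul, e_mul]
    exact (e_congr (by ring) (by ring) (by ring)).symm
  have hz : e 0 0 1 ∈ Subgroup.closure (S₀ : Set Heisenberg) := by
    rw [hzeq]
    exact Subgroup.mul_mem _ (Subgroup.mul_mem _ (Subgroup.mul_mem _ hx hy) (Subgroup.inv_mem _ hx)) (Subgroup.inv_mem _ hy)
  rw [e_factor]
  exact Subgroup.mul_mem _ (Subgroup.mul_mem _ (Subgroup.zpow_mem _ hx a) (Subgroup.zpow_mem _ hy b)) (Subgroup.zpow_mem _ hz (c - a * b))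

end Heisenberg

section Comparison

variable {G : Type*} [Group G]

/-- The union of all word balls is a subgroup when it contains everything needed. -/
theorem mem_wordBall_of_closure {T : Finset G} (hT : Subgroup.closure (T : Set G) = ⊤)
    (g : G) : ∃ n : ℕ, g ∈ wordBall (T : Set G) n := by
  let U : Subgroup G :=
    { carrier := ⋃ n : ℕ, wordBall (T : Set G) n
      one_mem' := Set.mem_iUnion.mpr ⟨0, one_mem_wordBall 0⟩
      mul_mem' := by
        rintro a b ha hb
        obtain ⟨n, hn⟩ := Set.mem_iUnion.mp ha
        obtain ⟨m, hm⟩ := Set.mem_iUnion.mp hb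
        exact Set.mem_iUnion.mpr ⟨n + m, mul_mem_wordBall hn hm⟩
      inv_mem' := by
        rintro a ha
        obtain ⟨n, hn⟩ := Set.mem_iUnion.mp ha
        exact Set.mem_iUnion.mpr ⟨n, inv_mem_wordBall hn⟩ }
  have hle : Subgroup.closure (T : Set G) ≤ U :=
    (Subgroup.closure_le U).mpr fun t ht => Set.mem_iUnion.mpr ⟨1, mem_wordBall_self ht⟩
  have : g ∈ U := hle (hT ▸ Subgroup.mem_top g)
  exact Set.mem_iUnion.mp this

theorem wordBall_subset_wordBall {S T : Finset G} {c : ℕ}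
    (hc : ∀ s ∈ S, s ∈ wordBall (T : Set G) c) (n : ℕ) :
    wordBall (S : Set G) n ⊆ wordBall (T : Set G) (c * n) := by
  have key : ∀ l : List G, (∀ w ∈ l, w ∈ (S : Set G) ∨ w⁻¹ ∈ (S : Set G)) →
      l.prod ∈ wordBall (T : Set G) (c * l.length) := by
    intro l
    induction l with
    | nil => intro _; simpa using one_mem_wordBall 0
    | cons w t ih =>
        intro hl
        have hw : w ∈ wordBall (T : Set G) c := by
          rcases hl w List.mem_cons_self with h | h
          · exact hc w h
          · simpa using inv_mem_wordBall (hc _ h)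
        have ht := ih fun x hx => hl x (List.mem_cons_of_mem w hx)
        rw [List.prod_cons]
        have := mul_mem_wordBall hw ht
        refine wordBall_mono (by simp [List.length_cons]; ring_nf; omega) this
  rintro g ⟨l, ha, hb, rfl⟩
  exact wordBall_mono (Nat.mul_le_mul_left c hb) (key l ha)

theorem growthLe_autGrowth (S T : Finset G) (hT : Subgroup.closure (T : Set G) = ⊤) :
    GrowthLe (autGrowth (S : Set G)) (autGrowth (T : Set G)) := by
  classical
  have hch : ∀ s : G, ∃ n : ℕ, s ∈ wordBall (T : Set G) n := mem_wordBall_of_closure hT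
  choose f hf using hch
  set c := S.sup f + 1 with hcdef
  have hc : ∀ s ∈ S, s ∈ wordBall (T : Set G) c := fun s hs =>
    wordBall_mono (by have := Finset.le_sup (f := f) hs; omega) (hf s)
  refine ⟨c, by omega, fun n => ?_⟩
  have h1 : autGrowth (S : Set G) n ≤ autGrowth (T : Set G) (c * n) :=
    Set.ncard_le_ncard (Set.image_mono (wordBall_subset_wordBall hc n))
      ((wordBall_finite T.finite_toSet (c * n)).image _)
  have h2 : autGrowth (T : Set G) (c * n) ≤ autGrowth (T : Set G) (c * n + c) :=
    autGrowth_mono T.finite_toSet (by omega)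
  have h3 : autGrowth (T : Set G) (c * n + c) ≤ c * autGrowth (T : Set G) (c * n + c) + c :=
    by have := Nat.le_mul_of_pos_left (autGrowth (T : Set G) (c * n + c)) (show 0 < c by omega)
       omega
  omega

end Comparison
/-- the Heisenberg group is finitely generated and its automorphic
growth is quadratic, with respect to every finite generating set. -/
theorem automorphic_growth_heisenberg :
    (∃ S : Finset Heisenberg, Subgroup.closure (S : Set Heisenberg) = ⊤) ∧
    (∀ S : Finset Heisenberg, Subgroup.closure (S : Set Heisenberg) = ⊤ →
      GrowthEquiv (autGrowth (S : Set Heisenberg)) (fun n => n ^ 2)) := by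
  refine ⟨⟨Heisenberg.S₀, Heisenberg.closure_S₀⟩, fun S hS => ⟨?_, ?_⟩⟩
  · -- autGrowth S ≼ n²
    obtain ⟨c, hc, hcomp⟩ := growthLe_autGrowth S Heisenberg.S₀ Heisenberg.closure_S₀
    refine ⟨3 * c + 3, by omega, fun n => ?_⟩
    have A := hcomp n
    have B := Heisenberg.upper (c * n + c)
    have hu : c * n + c + 1 ≤ (3 * c + 3) * n + (3 * c + 3) := by nlinarith
    have hsq : (c * n + c + 1) ^ 2 ≤ ((3 * c + 3) * n + (3 * c + 3)) ^ 2 :=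
      Nat.pow_le_pow_left hu 2
    calc autGrowth (S : Set Heisenberg) n
        ≤ c * autGrowth (Heisenberg.S₀ : Set Heisenberg) (c * n + c) + c := A
      _ ≤ c * (3 * (c * n + c + 1) ^ 2) + c := by
          have := Nat.mul_le_mul_left c B
          omega
      _ ≤ (3 * c + 3) * ((3 * c + 3) * n + (3 * c + 3)) ^ 2 + (3 * c + 3) := by
          have h1 : c * (3 * (c * n + c + 1) ^ 2) ≤ (3 * c) * ((3*c+3) * n + (3*c+3)) ^ 2 := by
            calc c * (3 * (c * n + c + 1) ^ 2) = (3 * c) * (c * n + c + 1) ^ 2 := by ring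
              _ ≤ (3 * c) * ((3*c+3) * n + (3*c+3)) ^ 2 := Nat.mul_le_mul_left _ hsq
          have h2 : (3 * c) * ((3*c+3) * n + (3*c+3)) ^ 2
              ≤ (3 * c + 3) * ((3*c+3) * n + (3*c+3)) ^ 2 := Nat.mul_le_mul_right _ (by omega)
          omega
  · -- n² ≼ autGrowth S
    obtain ⟨d, hd, hcomp⟩ := growthLe_autGrowth Heisenberg.S₀ S hS
    refine ⟨7 * d, by omega, fun n => ?_⟩
    have A := Heisenberg.lower n
    have B := hcomp (6 * n + 6)
    have hmono : autGrowth (S : Set Heisenberg) (d * (6 * n + 6) + d)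
        ≤ autGrowth (S : Set Heisenberg) (7 * d * n + 7 * d) :=
      autGrowth_mono S.finite_toSet (by nlinarith)
    have h1 : d * autGrowth (S : Set Heisenberg) (d * (6 * n + 6) + d)
        ≤ (7 * d) * autGrowth (S : Set Heisenberg) (7 * d * n + 7 * d) :=
      Nat.mul_le_mul (by omega) hmono
    show n ^ 2 ≤ 7 * d * autGrowth (S : Set Heisenberg) (7 * d * n + 7 * d) + 7 * d
    omega
end

section
/- Let G be a finitely generated group and let H be a subgroup of G of finite index. Then the subgroup K = {φ ∈ Aut(G) : φ(H) = H} of Aut(G) has finite index in Aut(G). -/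
open Pointwise

/-- A f.g. group has finitely many homomorphisms into any finite monoid. -/
lemma finite_monoidHom_of_fg {G M : Type*} [Group G] [Monoid M] [Finite M]
    (hfg : ∃ S : Finset G, Subgroup.closure (S : Set G) = ⊤) :
    Finite (G →* M) := by
  obtain ⟨S, hS⟩ := hfg
  refine Finite.of_injective (fun ρ => (fun s : S => ρ s.1)) ?_
  intro ρ ρ' h
  refine MonoidHom.eq_of_eqOn_dense hS ?_
  intro x hx
  exact congrFun h ⟨x, hx⟩

/-- if `H` is a finite-index subgroup of a finitely generated group
`G`, then the setwise stabiliser `K = {φ ∈ Aut G : φ(H) = H}` is a subgroup of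
`Aut G` of finite index. -/
theorem aut_stabiliser_of_finite_index_subgroup_has_finite_index
    {G : Type*} [Group G]
    (hfg : ∃ S : Finset G, Subgroup.closure (S : Set G) = ⊤)
    (H : Subgroup G) (hH : H.FiniteIndex) :
    ∃ K : Subgroup (MulAut G),
      (∀ φ : MulAut G, φ ∈ K ↔ Subgroup.map φ.toMonoidHom H = H) ∧
      K.FiniteIndex := by
  classical
  refine ⟨MulAction.stabilizer (MulAut G) H, fun φ => Iff.rfl, ?_⟩
  -- the quotient space of G by H is finite
  haveI : Finite (G ⧸ H) := H.finite_quotient_of_finiteIndex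
  haveI : Finite (G →* Equiv.Perm (G ⧸ H)) := finite_monoidHom_of_fg hfg
  -- the map sending φ to the permutation action of G on G ⧸ H twisted by φ⁻¹
  set F : MulAut G → (G →* Equiv.Perm (G ⧸ H)) :=
    fun φ => (MulAction.toPermHom G (G ⧸ H)).comp φ.symm.toMonoidHom with hF
  set g : (G →* Equiv.Perm (G ⧸ H)) → Subgroup G :=
    fun ρ => Subgroup.comap ρ
      (MulAction.stabilizer (Equiv.Perm (G ⧸ H)) ((1 : G) : G ⧸ H)) with hg
  have key : ∀ φ : MulAut G, φ • H = g (F φ) := by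
    intro φ
    ext x
    have h1 : x ∈ φ • H ↔ φ.symm x ∈ H := by
      rw [Subgroup.pointwise_smul_def]
      show x ∈ Subgroup.map φ.toMonoidHom H ↔ _
      rw [Subgroup.mem_map]
      constructor
      · rintro ⟨y, hy, rfl⟩
        simpa using hy
      · intro hx
        exact ⟨φ.symm x, hx, by simp⟩
    rw [h1, hg, Subgroup.mem_comap, MulAction.mem_stabilizer_iff, hF]
    simp only [MonoidHom.comp_apply, MulEquiv.coe_toMonoidHom,
      MulAction.toPermHom_apply, Equiv.Perm.smul_def, MulAction.toPerm_apply]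
    rw [show ((1 : G) : G ⧸ H) = QuotientGroup.mk 1 from rfl,
      MulAction.Quotient.smul_mk, QuotientGroup.eq]
    simp
  -- the orbit of H is finite, hence the stabilizer has finite index
  have horb : Finite (MulAction.orbit (MulAut G) H) := by
    have : MulAction.orbit (MulAut G) H ⊆ Set.range g := by
      rintro _ ⟨φ, rfl⟩
      exact ⟨F φ, (key φ).symm⟩
    exact Set.Finite.subset (Set.finite_range g) this
  haveI : Finite (MulAut G ⧸ MulAction.stabilizer (MulAut G) H) :=
    Finite.of_equiv _ (MulAction.orbitEquivQuotientStabilizer (MulAut G) H)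
  exact Subgroup.finiteIndex_of_finite_quotient
end

section
/- Let M ∈ GL₂(ℤ) have finite order (M^k = 1 for some k ≥ 1). Then exactly one of the following holds: (1) M is a scalar matrix, i.e. M = I or M = −I, in which case its centralizer in GL₂(ℤ) is all of GL₂(ℤ); or (2) the centralizer C of M in GL₂(ℤ) is abelian and virtually cyclic, i.e. C is commutative and there exists a cyclic subgroup of C of finite index in C. -/
open Matrix

/-! ### Auxiliary lemmas -/

private def chebU (t e : ℤ) : ℕ → ℤ
  | 0 => 0
  | 1 => 1
  | (n+2) => t * chebU t e (n+1) - e * chebU t e n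

private lemma chebU_ne_zero (t e : ℤ) (h : (e = 1 ∧ 4 ≤ t^2) ∨ (e = -1 ∧ t ≠ 0)) (n : ℕ) :
    chebU t e (n+1) ≠ 0 := by
  set s : ℤ := if 0 ≤ t then 1 else -1 with hs
  have hs1 : s = 1 ∨ s = -1 := by unfold s; split <;> simp
  have hs2 : s^2 = 1 := by rcases hs1 with h|h <;> simp [h]
  have hst : 1 ≤ s * t := by
    have ht : t ≠ 0 := by
      rcases h with ⟨_, h4⟩|⟨_, h0⟩
      · intro h0; rw [h0] at h4; norm_num at h4
      · exact h0
    unfold s; split <;> omega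
  have hst2 : e = 1 → 2 ≤ s * t := by
    intro he; rcases h with ⟨_, h4⟩|⟨he', _⟩
    · unfold s; split <;> nlinarith
    · omega
  have key : ∀ n : ℕ, 0 ≤ s^(n+1) * chebU t e n ∧ 1 ≤ s^n * chebU t e (n+1) ∧
      (e = 1 → s^(n+1) * chebU t e n + 1 ≤ s^n * chebU t e (n+1)) := by
    intro n
    induction n with
    | zero => simp [chebU]
    | succ m ih =>
      obtain ⟨hA, hB, hC⟩ := ih
      have hstep : chebU t e (m+2) = t * chebU t e (m+1) - e * chebU t e m := rfl
      have hpow1 : s^(m+1) * chebU t e (m+2)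
          = (s*t) * (s^m * chebU t e (m+1)) - e * (s^(m+1) * chebU t e m) := by
        rw [hstep]; ring
      have hA' : 0 ≤ s^(m+2) * chebU t e (m+1) := by
        have h7 : s^(m+2) * chebU t e (m+1) = s^2 * (s^m * chebU t e (m+1)) := by ring
        rw [h7, hs2]; linarith
      have hBmul : 1 * (s^m * chebU t e (m+1)) ≤ (s*t) * (s^m * chebU t e (m+1)) :=
        mul_le_mul_of_nonneg_right hst (by linarith)
      refine ⟨hA', ?_, ?_⟩
      · rcases h with ⟨he, _⟩|⟨he, _⟩
        · subst he
          have h2 := hst2 rfl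
          have h2m : 2 * (s^m * chebU t 1 (m+1)) ≤ (s*t) * (s^m * chebU t 1 (m+1)) :=
            mul_le_mul_of_nonneg_right h2 (by linarith)
          rw [hpow1]; have := hC rfl; linarith
        · subst he; rw [hpow1]; linarith
      · intro he
        subst he
        have h2 := hst2 rfl
        have h2m : 2 * (s^m * chebU t 1 (m+1)) ≤ (s*t) * (s^m * chebU t 1 (m+1)) :=
          mul_le_mul_of_nonneg_right h2 (by linarith)
        have heq : s^(m+2) * chebU t 1 (m+1) = s^2 * (s^m * chebU t 1 (m+1)) := by ring
        rw [hpow1, heq, hs2]; have := hC rfl; linarith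
  intro hzero
  have := (key n).2.1
  rw [hzero, mul_zero] at this
  omega

private lemma CH2 (A : Matrix (Fin 2) (Fin 2) ℤ) :
    A * A = (A 0 0 + A 1 1) • A - (A 0 0 * A 1 1 - A 0 1 * A 1 0) • (1 : Matrix (Fin 2) (Fin 2) ℤ) := by
  ext i j
  simp only [Matrix.mul_apply, Fin.sum_univ_succ, Fin.sum_univ_zero, Matrix.sub_apply,
    Matrix.smul_apply, Matrix.one_apply, smul_eq_mul]
  fin_cases i <;> fin_cases j <;> simp <;> ring

private lemma pow_formula (A : Matrix (Fin 2) (Fin 2) ℤ) (t e : ℤ)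
    (hCH : A * A = t • A - e • (1 : Matrix (Fin 2) (Fin 2) ℤ)) :
    ∀ n : ℕ, A ^ (n+1) = (chebU t e (n+1)) • A - (e * chebU t e n) • (1 : Matrix (Fin 2) (Fin 2) ℤ) := by
  intro n
  induction n with
  | zero => simp [chebU]
  | succ m ih =>
    rw [pow_succ, ih, sub_mul, smul_mul_assoc, smul_mul_assoc, one_mul, hCH]
    have hc : chebU t e (m+2) = t * chebU t e (m+1) - e * chebU t e m := rfl
    rw [hc]
    module

private lemma mul_le_four {x1 x2 x3 x4 y1 y2 y3 y4 : ℤ} (h1 : x1 ≤ y1) (h2 : x2 ≤ y2)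
    (h3 : x3 ≤ y3) (h4 : x4 ≤ y4) (n1 : 0 ≤ x1) (n2 : 0 ≤ x2) (n3 : 0 ≤ x3) (n4 : 0 ≤ x4) :
    x1*x2*x3*x4 ≤ y1*y2*y3*y4 := by
  have a12 := mul_le_mul h1 h2 n2 (n1.trans h1)
  have a123 := mul_le_mul a12 h3 n3 (mul_nonneg (n1.trans h1) (n2.trans h2))
  exact mul_le_mul a123 h4 n4 (mul_nonneg (mul_nonneg (n1.trans h1) (n2.trans h2)) (n3.trans h3))

private lemma facts_A (a : ℤ) : (1:ℤ) ≤ 1+a^2 := le_add_of_nonneg_right (sq_nonneg a)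
private lemma facts_W2 (b : ℤ) : b^2 ≤ (1+b^2)^2 := by nlinarith [sq_nonneg b, sq_nonneg (b^2)]
private lemma facts_W4 (b : ℤ) : b^4 ≤ (1+b^2)^2 := by nlinarith [sq_nonneg b, sq_nonneg (b^2)]

private lemma K_pos (a b c d : ℤ) : (1:ℤ) ≤ 64*(1+a^2)*(1+b^2)^2*(1+c^2)^2*(1+d^2) := by
  have h1 : (1:ℤ)*1*1*1 ≤ (1+a^2)*(1+b^2)^2*(1+c^2)^2*(1+d^2) :=
    mul_le_four (facts_A a) (by nlinarith [sq_nonneg b, sq_nonneg (b^2)])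
      (by nlinarith [sq_nonneg c, sq_nonneg (c^2)]) (facts_A d)
      zero_le_one zero_le_one zero_le_one zero_le_one
  nlinarith [h1]

private lemma dom_q (a b c d q : ℤ) (h : q^2 ≤ 4*b^4) :
    q^2 ≤ 64*(1+a^2)*(1+b^2)^2*(1+c^2)^2*(1+d^2) := by
  have h1 : (1:ℤ)*b^4*1*1 ≤ (1+a^2)*(1+b^2)^2*(1+c^2)^2*(1+d^2) :=
    mul_le_four (facts_A a) (facts_W4 b) (by nlinarith [sq_nonneg c, sq_nonneg (c^2)]) (facts_A d)
      zero_le_one (by positivity) zero_le_one zero_le_one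
  nlinarith [sq_nonneg (b^2)]

private lemma dom_r (a b c d r : ℤ) (h : r^2 ≤ 4*c^2*b^2) :
    r^2 ≤ 64*(1+a^2)*(1+b^2)^2*(1+c^2)^2*(1+d^2) := by
  have h1 : (1:ℤ)*b^2*c^2*1 ≤ (1+a^2)*(1+b^2)^2*(1+c^2)^2*(1+d^2) :=
    mul_le_four (facts_A a) (facts_W2 b) (facts_W2 c) (facts_A d)
      zero_le_one (sq_nonneg b) (sq_nonneg c) zero_le_one
  nlinarith [mul_nonneg (sq_nonneg c) (sq_nonneg b)]

private lemma dom_p (a b c d p : ℤ) (h : p^2 ≤ 8*(1+a^2)*b^2) :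
    p^2 ≤ 64*(1+a^2)*(1+b^2)^2*(1+c^2)^2*(1+d^2) := by
  have h1 : (1+a^2)*b^2*(1:ℤ)*1 ≤ (1+a^2)*(1+b^2)^2*(1+c^2)^2*(1+d^2) :=
    mul_le_four le_rfl (facts_W2 b) (by nlinarith [sq_nonneg c, sq_nonneg (c^2)]) (facts_A d)
      (by positivity) (sq_nonneg b) zero_le_one zero_le_one
  nlinarith [mul_nonneg (by positivity : (0:ℤ) ≤ 1+a^2) (sq_nonneg b)]

private lemma dom_s (a b c d s : ℤ) (h : s^2 ≤ 16*(1+a^2)*b^2 + 8*(a-d)^2*b^2) :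
    s^2 ≤ 64*(1+a^2)*(1+b^2)^2*(1+c^2)^2*(1+d^2) := by
  have h1 : (1+a^2)*b^2*(1:ℤ)*1 ≤ (1+a^2)*(1+b^2)^2*(1+c^2)^2*(1+d^2) :=
    mul_le_four le_rfl (facts_W2 b) (by nlinarith [sq_nonneg c, sq_nonneg (c^2)]) (facts_A d)
      (by positivity) (sq_nonneg b) zero_le_one zero_le_one
  have h2 : (a^2)*b^2*(1:ℤ)*1 ≤ (1+a^2)*(1+b^2)^2*(1+c^2)^2*(1+d^2) :=
    mul_le_four (by nlinarith : a^2 ≤ 1+a^2) (facts_W2 b) (by nlinarith [sq_nonneg c, sq_nonneg (c^2)]) (facts_A d)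
      (sq_nonneg a) (sq_nonneg b) zero_le_one zero_le_one
  have h3 : (d^2)*b^2*(1:ℤ)*1 ≤ (1+d^2)*(1+b^2)^2*(1+c^2)^2*(1+a^2) :=
    mul_le_four (by nlinarith : d^2 ≤ 1+d^2) (facts_W2 b) (by nlinarith [sq_nonneg c, sq_nonneg (c^2)]) (facts_A a)
      (sq_nonneg d) (sq_nonneg b) zero_le_one zero_le_one
  have had : (a-d)^2*b^2 ≤ 2*(a^2*b^2) + 2*(d^2*b^2) := by
    nlinarith [sq_nonneg (a+d), sq_nonneg b, mul_nonneg (sq_nonneg (a+d)) (sq_nonneg b)]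
  nlinarith [h1, h2, h3, had]

private lemma entry_bound (a b c d p q r s η : ℤ) (hb : b ≠ 0)
    (hcl : (a*d - b*c = 1 ∧ (a+d)^2 ≤ 1) ∨ (a*d - b*c = -1 ∧ a+d = 0))
    (hη : η = 1 ∨ η = -1)
    (h1 : c*q = b*r) (h2 : b*(p-s) = q*(a-d)) (hdet : p*s - q*r = η) :
    p^2 ≤ 64*(1+a^2)*(1+b^2)^2*(1+c^2)^2*(1+d^2) ∧
    q^2 ≤ 64*(1+a^2)*(1+b^2)^2*(1+c^2)^2*(1+d^2) ∧
    r^2 ≤ 64*(1+a^2)*(1+b^2)^2*(1+c^2)^2*(1+d^2) ∧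
    s^2 ≤ 64*(1+a^2)*(1+b^2)^2*(1+c^2)^2*(1+d^2) := by
  have hb2 : 1 ≤ b^2 := by rcases lt_or_gt_of_ne hb with h|h <;> nlinarith
  have hb2pos : (0:ℤ) < b^2 := by linarith
  have hb4 : b^2 ≤ b^4 := by nlinarith
  have hb41 : (1:ℤ) ≤ b^4 := by nlinarith
  set X : ℤ := p*b - a*q with hX
  have key : X^2 + (a+d)*X*q + (a*d - b*c)*q^2 = η * b^2 := by
    rw [← hdet, hX]; ring_nf; linear_combination (b*p)*h2 - (b*q)*h1
  have hXY : X^2 ≤ 4*b^4 ∧ q^2 ≤ 4*b^4 := by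
    rcases hcl with ⟨he, ht⟩|⟨he, ht⟩
    · have e1 : X^2 + (X + (a+d)*q)^2 + (2 - (a+d)^2)*q^2 = 2*(η*b^2) := by
        linear_combination 2*key - 2*q^2*he
      have f1 : 0 ≤ (X + (a+d)*q)^2 := sq_nonneg _
      have f2 : 0 ≤ (1 - (a+d)^2)*q^2 := mul_nonneg (by linarith) (sq_nonneg q)
      have f3 : η*b^2 ≤ b^2 := by rcases hη with h|h <;> nlinarith
      constructor
      · nlinarith [sq_nonneg q]
      · nlinarith [sq_nonneg X]
    · have hk : (X - q) * (X + q) = η * b^2 := by linear_combination key - q^2*he - X*q*ht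
      have hnz : η * b^2 ≠ 0 := by rcases hη with h|h <;> subst h <;> simpa using pow_ne_zero 2 hb
      have hu : X - q ≠ 0 := by intro h0; rw [h0, zero_mul] at hk; exact hnz hk.symm
      have hv : X + q ≠ 0 := by intro h0; rw [h0, mul_zero] at hk; exact hnz hk.symm
      have hu2 : 1 ≤ (X-q)^2 := by rcases lt_or_gt_of_ne hu with h|h <;> nlinarith
      have hv2 : 1 ≤ (X+q)^2 := by rcases lt_or_gt_of_ne hv with h|h <;> nlinarith
      have hsum : (X-q)^2 + (X+q)^2 ≤ b^4 + 1 := by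
        have huv : (X-q)^2 * (X+q)^2 = b^4 := by
          have h9 : ((X-q)*(X+q))^2 = (η*b^2)^2 := by rw [hk]
          rcases hη with h|h <;> subst h <;> linear_combination h9
        have h8 := mul_nonneg (by linarith : (0:ℤ) ≤ (X-q)^2 - 1) (by linarith : (0:ℤ) ≤ (X+q)^2 - 1)
        nlinarith [h8]
      have h2uv1 : 2*((X-q)*(X+q)) ≤ 2*b^2 := by
        rcases hη with h|h <;> subst h <;> linarith [hk, hb2pos]
      have h2uv2 : -(2*b^2) ≤ 2*((X-q)*(X+q)) := by
        rcases hη with h|h <;> subst h <;> linarith [hk, hb2pos]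
      constructor
      · linarith [hsum, h2uv1, hb4, hb41]
      · linarith [hsum, h2uv2, hb4, hb41]
  obtain ⟨hX2, hq2⟩ := hXY
  clear key hcl hdet
  refine ⟨?_, dom_q a b c d q hq2, ?_, ?_⟩
  · apply dom_p a b c d p
    have hp1sq : (p*b)^2 = (X + a*q)^2 := by rw [hX]; ring_nf
    have hqa : a^2*q^2 ≤ a^2*(4*b^4) := mul_le_mul_of_nonneg_left hq2 (sq_nonneg a)
    have h5 : p^2*b^2 ≤ (8*(1+a^2)*b^2)*b^2 := by
      linarith [sq_nonneg (X - a*q), hp1sq, hX2, hqa]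
    exact le_of_mul_le_mul_right h5 hb2pos
  · apply dom_r a b c d r
    have hr1 : r^2*b^2 = c^2*q^2 := by linear_combination (-(c*q+b*r))*h1
    have hrq : c^2*q^2 ≤ c^2*(4*b^4) := mul_le_mul_of_nonneg_left hq2 (sq_nonneg c)
    have h5 : r^2*b^2 ≤ (4*c^2*b^2)*b^2 := by linarith [hr1, hrq]
    exact le_of_mul_le_mul_right h5 hb2pos
  · apply dom_s a b c d s
    have hs1sq : (b*s)^2 = (b*p - q*(a-d))^2 := by
      have hs1 : b*s = b*p - q*(a-d) := by linarith [h2]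
      rw [hs1]
    have hp2 : p^2 ≤ 8*(1+a^2)*b^2 := by
      have hp1sq : (p*b)^2 = (X + a*q)^2 := by rw [hX]; ring_nf
      have hqa : a^2*q^2 ≤ a^2*(4*b^4) := mul_le_mul_of_nonneg_left hq2 (sq_nonneg a)
      have h5 : p^2*b^2 ≤ (8*(1+a^2)*b^2)*b^2 := by
        linarith [sq_nonneg (X - a*q), hp1sq, hX2, hqa]
      exact le_of_mul_le_mul_right h5 hb2pos
    have hbp : b^2*p^2 ≤ b^2*(8*(1+a^2)*b^2) := mul_le_mul_of_nonneg_left hp2 (sq_nonneg b)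
    have hqad : q^2*(a-d)^2 ≤ (4*b^4)*(a-d)^2 := mul_le_mul_of_nonneg_right hq2 (sq_nonneg (a-d))
    have h5 : s^2*b^2 ≤ (16*(1+a^2)*b^2 + 8*(a-d)^2*b^2)*b^2 := by
      linarith [sq_nonneg (b*p + q*(a-d)), hs1sq, hbp, hqad]
    exact le_of_mul_le_mul_right h5 hb2pos

private lemma comm_entries (a b c d p q r s t' u v w : ℤ)
    (hns : ¬(b = 0 ∧ c = 0 ∧ a = d))
    (R1 : c*q = b*r) (R2 : b*(p-s) = q*(a-d)) (R3 : r*(a-d) = c*(p-s))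
    (S1 : c*u = b*v) (S2 : b*(t'-w) = u*(a-d)) (S3 : v*(a-d) = c*(t'-w)) :
    q*v = u*r ∧ u*(p-s) = q*(t'-w) ∧ r*(t'-w) = v*(p-s) := by
  by_cases hb : b = 0
  · by_cases hc : c = 0
    · -- diagonal case, a ≠ d
      have hd : a - d ≠ 0 := by
        intro h0; exact hns ⟨hb, hc, by linarith⟩
      subst hb; subst hc
      have hq : q = 0 := by
        rcases mul_eq_zero.mp (show q * (a-d) = 0 by linarith [R2]) with h|h
        · exact h
        · exact absurd h hd
      have hr : r = 0 := by
        rcases mul_eq_zero.mp (show r * (a-d) = 0 by linarith [R3]) with h|h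
        · exact h
        · exact absurd h hd
      have hu : u = 0 := by
        rcases mul_eq_zero.mp (show u * (a-d) = 0 by linarith [S2]) with h|h
        · exact h
        · exact absurd h hd
      have hv : v = 0 := by
        rcases mul_eq_zero.mp (show v * (a-d) = 0 by linarith [S3]) with h|h
        · exact h
        · exact absurd h hd
      simp [hq, hr, hu, hv]
    · -- c ≠ 0 (and b = 0)
      have E1 : q*v = u*r := by
        have h0 : c*(q*v - u*r) = 0 := by linear_combination v*R1 - r*S1
        have := mul_eq_zero.mp h0
        rcases this with h|h
        · exact absurd h hc
        · linarith
      refine ⟨E1, ?_, ?_⟩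
      · have h0 : c*(u*(p-s) - q*(t'-w)) = 0 := by
          linear_combination q*S3 - u*R3 - (a-d)*E1
        rcases mul_eq_zero.mp h0 with h|h
        · exact absurd h hc
        · linarith
      · have h0 : c*(r*(t'-w) - v*(p-s)) = 0 := by
          linear_combination v*R3 - r*S3
        rcases mul_eq_zero.mp h0 with h|h
        · exact absurd h hc
        · linarith
  · -- b ≠ 0
    have E1 : q*v = u*r := by
      have h0 : b*(q*v - u*r) = 0 := by linear_combination u*R1 - q*S1
      rcases mul_eq_zero.mp h0 with h|h
      · exact absurd h hb
      · linarith
    refine ⟨E1, ?_, ?_⟩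
    · have h0 : b*(u*(p-s) - q*(t'-w)) = 0 := by linear_combination u*R2 - q*S2
      rcases mul_eq_zero.mp h0 with h|h
      · exact absurd h hb
      · linarith
    · have h0 : b*(r*(t'-w) - v*(p-s)) = 0 := by
        linear_combination r*S2 - v*R2 - (a-d)*E1
      rcases mul_eq_zero.mp h0 with h|h
      · exact absurd h hb
      · linarith

private lemma rel_of_comm (Mv B : Matrix (Fin 2) (Fin 2) ℤ) (h : B * Mv = Mv * B) :
    Mv 1 0 * B 0 1 = Mv 0 1 * B 1 0 ∧
    Mv 0 1 * (B 0 0 - B 1 1) = B 0 1 * (Mv 0 0 - Mv 1 1) ∧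
    B 1 0 * (Mv 0 0 - Mv 1 1) = Mv 1 0 * (B 0 0 - B 1 1) := by
  have e : ∀ i j, (B * Mv) i j = (Mv * B) i j := fun i j => by rw [h]
  have e00 := e 0 0
  have e01 := e 0 1
  have e10 := e 1 0
  simp only [Matrix.mul_apply, Fin.sum_univ_two] at e00 e01 e10
  refine ⟨by linarith, by linarith, by linarith⟩

private lemma finite_of_bounded (G : Subgroup (GL (Fin 2) ℤ)) (K : ℤ) (hK1 : (1:ℤ) ≤ K)
    (hKb : ∀ B : GL (Fin 2) ℤ, B ∈ G →
      (((B : Matrix (Fin 2) (Fin 2) ℤ) 0 0)^2 ≤ K ∧ ((B : Matrix (Fin 2) (Fin 2) ℤ) 0 1)^2 ≤ K ∧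
       ((B : Matrix (Fin 2) (Fin 2) ℤ) 1 0)^2 ≤ K ∧ ((B : Matrix (Fin 2) (Fin 2) ℤ) 1 1)^2 ≤ K)) :
    Finite G := by
  have habs : ∀ e : ℤ, e^2 ≤ K → e ∈ Set.Icc (-K) K := by
    intro e he
    constructor
    · rcases le_or_gt 0 e with h|h
      · linarith
      · have h1 : 1 ≤ -e := by omega
        nlinarith
    · rcases le_or_gt e 0 with h|h
      · linarith
      · have h1 : 1 ≤ e := by omega
        nlinarith
  haveI : Finite (Set.Icc (-K) K) := (Set.finite_Icc _ _).to_subtype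
  refine Finite.of_injective (fun B : ↥G =>
    ((⟨((B : GL (Fin 2) ℤ) : Matrix (Fin 2) (Fin 2) ℤ) 0 0, habs _ (hKb B B.2).1⟩ : Set.Icc (-K) K),
     (⟨((B : GL (Fin 2) ℤ) : Matrix (Fin 2) (Fin 2) ℤ) 0 1, habs _ (hKb B B.2).2.1⟩ : Set.Icc (-K) K),
     (⟨((B : GL (Fin 2) ℤ) : Matrix (Fin 2) (Fin 2) ℤ) 1 0, habs _ (hKb B B.2).2.2.1⟩ : Set.Icc (-K) K),
     (⟨((B : GL (Fin 2) ℤ) : Matrix (Fin 2) (Fin 2) ℤ) 1 1, habs _ (hKb B B.2).2.2.2⟩ : Set.Icc (-K) K))) ?_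
  intro B1 B2 hE
  simp only [Prod.mk.injEq, Subtype.mk.injEq] at hE
  obtain ⟨e00, e01, e10, e11⟩ := hE
  apply Subtype.ext
  apply Units.ext
  ext i j
  fin_cases i <;> fin_cases j <;> assumption

private def ncS1 : GL (Fin 2) ℤ := ⟨!![1,1;0,1], !![1,-1;0,1],
  by rw [Matrix.mul_fin_two]; norm_num; exact Matrix.one_fin_two.symm,
  by rw [Matrix.mul_fin_two]; norm_num; exact Matrix.one_fin_two.symm⟩

private def ncS2 : GL (Fin 2) ℤ := ⟨!![1,0;1,1], !![1,0;-1,1],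
  by rw [Matrix.mul_fin_two]; norm_num; exact Matrix.one_fin_two.symm,
  by rw [Matrix.mul_fin_two]; norm_num; exact Matrix.one_fin_two.symm⟩

private lemma ncS_ne : ncS1 * ncS2 ≠ ncS2 * ncS1 := by
  intro h
  have h2 := congrArg (fun u : GL (Fin 2) ℤ => (u : Matrix (Fin 2) (Fin 2) ℤ) 0 0) h
  simp only [Units.val_mul] at h2
  norm_num [ncS1, ncS2, Matrix.mul_fin_two] at h2

set_option maxHeartbeats 2000000 in
/-- if `M ∈ GL₂(ℤ)` has finite order, then exactly one of the
following holds: (1) `M` is a scalar matrix `±I` and its centraliser is all of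
`GL₂(ℤ)`, or (2) the centraliser of `M` is abelian and virtually cyclic. -/
theorem GL2Z_finite_order_centralizer (M : GL (Fin 2) ℤ) (hM : IsOfFinOrder M) :
    Xor'
      ((((M : Matrix (Fin 2) (Fin 2) ℤ) = 1 ∨ (M : Matrix (Fin 2) (Fin 2) ℤ) = -1)) ∧
        Subgroup.centralizer {M} = (⊤ : Subgroup (GL (Fin 2) ℤ)))
      ((∀ a ∈ Subgroup.centralizer {M}, ∀ b ∈ Subgroup.centralizer {M}, a * b = b * a) ∧
        ∃ D : Subgroup (Subgroup.centralizer {M} : Subgroup (GL (Fin 2) ℤ)),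
          IsCyclic D ∧ D.FiniteIndex) := by
  classical
  by_cases hscal : ((M : Matrix (Fin 2) (Fin 2) ℤ) = 1 ∨ (M : Matrix (Fin 2) (Fin 2) ℤ) = -1)
  · -- scalar case
    have htop : Subgroup.centralizer {M} = (⊤ : Subgroup (GL (Fin 2) ℤ)) := by
      have hMval : M = 1 ∨ M = -1 := by
        rcases hscal with h|h
        · left; exact Units.ext h
        · right; exact Units.ext (by simpa using h)
      rw [eq_top_iff]
      intro x _
      rw [Subgroup.mem_centralizer_iff]
      intro g hg
      rcases hg with rfl
      rcases hMval with h|h <;> rw [h] <;> simp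
    left
    refine ⟨⟨hscal, htop⟩, ?_⟩
    rintro ⟨habel, -⟩
    exact ncS_ne (habel ncS1 (htop ▸ Subgroup.mem_top _) ncS2 (htop ▸ Subgroup.mem_top _))
  · -- nonscalar case
    set Mv : Matrix (Fin 2) (Fin 2) ℤ := (M : Matrix (Fin 2) (Fin 2) ℤ) with hMv
    set a : ℤ := Mv 0 0 with ha
    set b : ℤ := Mv 0 1 with hb
    set c : ℤ := Mv 1 0 with hc
    set d : ℤ := Mv 1 1 with hd
    have hdet : a*d - b*c = 1 ∨ a*d - b*c = -1 := by
      have h1 : IsUnit (Mv.det) := (Matrix.isUnit_iff_isUnit_det _).mp M.isUnit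
      rw [Matrix.det_fin_two] at h1
      exact Int.isUnit_iff.mp h1
    have hns : ¬(b = 0 ∧ c = 0 ∧ a = d) := by
      rintro ⟨hb0, hc0, had⟩
      have hbc : b*c = 0 := by rw [hb0, zero_mul]
      have ha1 : a = 1 ∨ a = -1 := by
        rcases hdet with h|h
        · have h5 : a*a = 1 := by linear_combination a*had + h + hbc
          exact Int.isUnit_iff.mp (IsUnit.of_mul_eq_one (a := a) a h5)
        · exfalso
          have h5 : a*a = -1 := by linear_combination a*had + h + hbc
          nlinarith [sq_nonneg a]
      apply hscal
      rcases ha1 with h1|h1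
      · left; ext i j; fin_cases i <;> fin_cases j <;>
          simp [← hMv, ← ha, ← hb, ← hc, ← hd, hb0, hc0, had ▸ h1, h1]
      · right; ext i j; fin_cases i <;> fin_cases j <;>
          simp [← hMv, ← ha, ← hb, ← hc, ← hd, hb0, hc0, had ▸ h1, h1]
    obtain ⟨k, hkpos, hMk⟩ := isOfFinOrder_iff_pow_eq_one.mp hM
    have hMvk : Mv ^ k = 1 := by
      rw [hMv, ← Units.val_pow_eq_pow_val, hMk, Units.val_one]
    have hclass : (a*d - b*c = 1 ∧ (a+d)^2 ≤ 1) ∨ (a*d - b*c = -1 ∧ a+d = 0) := by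
      by_contra hcon
      push_neg at hcon
      have halt : (a*d - b*c = 1 ∧ 4 ≤ (a+d)^2) ∨ (a*d - b*c = -1 ∧ a+d ≠ 0) := by
        rcases hdet with he|he
        · left
          refine ⟨he, ?_⟩
          have h2 : 1 < (a+d)^2 := hcon.1 he
          have h3 : a+d ≤ -2 ∨ (-1 ≤ a+d ∧ a+d ≤ 1) ∨ 2 ≤ a+d := by omega
          rcases h3 with h3|h3|h3
          · nlinarith
          · exfalso; nlinarith [h3.1, h3.2]
          · nlinarith
        · right; exact ⟨he, hcon.2 he⟩
      have hCH := CH2 Mv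
      rw [← ha, ← hb, ← hc, ← hd] at hCH
      obtain ⟨m, rfl⟩ : ∃ m, k = m + 1 := ⟨k - 1, by omega⟩
      have hpf := pow_formula Mv (a+d) (a*d - b*c) hCH m
      rw [hMvk] at hpf
      have hne := chebU_ne_zero (a+d) (a*d - b*c) halt m
      set u : ℤ := chebU (a+d) (a*d - b*c) (m+1) with hu
      set w : ℤ := (a*d - b*c) * chebU (a+d) (a*d - b*c) m with hw
      have entry : ∀ i j, (1 : Matrix (Fin 2) (Fin 2) ℤ) i j = u * Mv i j - w * (1 : Matrix (Fin 2) (Fin 2) ℤ) i j := by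
        intro i j
        have h7 := congrFun (congrFun hpf i) j
        rw [Matrix.sub_apply, Matrix.smul_apply, Matrix.smul_apply, smul_eq_mul, smul_eq_mul] at h7
        exact h7
      have e01 := entry 0 1
      have e10 := entry 1 0
      have e00 := entry 0 0
      have e11 := entry 1 1
      simp only [Matrix.one_apply_ne (by decide : (0:Fin 2) ≠ 1),
        Matrix.one_apply_ne (by decide : (1:Fin 2) ≠ 0), Matrix.one_apply_eq,
        mul_zero, sub_zero, mul_one, ← hb, ← hc, ← ha, ← hd] at e01 e10 e00 e11
      apply hns
      have hbz : b = 0 := by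
        rcases mul_eq_zero.mp (show u * b = 0 by linarith) with h|h
        · exact absurd h hne
        · exact h
      have hcz : c = 0 := by
        rcases mul_eq_zero.mp (show u * c = 0 by linarith) with h|h
        · exact absurd h hne
        · exact h
      have hadz : a = d := by
        have h8 : u * (a - d) = 0 := by linear_combination e11 - e00
        rcases mul_eq_zero.mp h8 with h|h
        · exact absurd h hne
        · linarith
      exact ⟨hbz, hcz, hadz⟩
    -- relations for centralizer elements
    have hrel : ∀ B : GL (Fin 2) ℤ, B ∈ Subgroup.centralizer {M} →
        (c * (B : Matrix (Fin 2) (Fin 2) ℤ) 0 1 = b * (B : Matrix (Fin 2) (Fin 2) ℤ) 1 0 ∧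
         b * ((B : Matrix (Fin 2) (Fin 2) ℤ) 0 0 - (B : Matrix (Fin 2) (Fin 2) ℤ) 1 1)
            = (B : Matrix (Fin 2) (Fin 2) ℤ) 0 1 * (a - d) ∧
         (B : Matrix (Fin 2) (Fin 2) ℤ) 1 0 * (a - d)
            = c * ((B : Matrix (Fin 2) (Fin 2) ℤ) 0 0 - (B : Matrix (Fin 2) (Fin 2) ℤ) 1 1)) := by
      intro B hB
      rw [Subgroup.mem_centralizer_iff] at hB
      have h9 := congrArg Units.val (hB M rfl)
      rw [Units.val_mul, Units.val_mul] at h9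
      have h10 := rel_of_comm Mv (B : Matrix (Fin 2) (Fin 2) ℤ) h9.symm
      rw [← ha, ← hb, ← hc, ← hd] at h10
      exact h10
    -- abelian
    have habelian : ∀ A ∈ Subgroup.centralizer {M}, ∀ B ∈ Subgroup.centralizer {M},
        A * B = B * A := by
      intro A hA B hB
      obtain ⟨R1, R2, R3⟩ := hrel A hA
      obtain ⟨T1, T2, T3⟩ := hrel B hB
      obtain ⟨E1, E2, E3⟩ := comm_entries a b c d
        ((A : Matrix (Fin 2) (Fin 2) ℤ) 0 0) ((A : Matrix (Fin 2) (Fin 2) ℤ) 0 1)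
        ((A : Matrix (Fin 2) (Fin 2) ℤ) 1 0) ((A : Matrix (Fin 2) (Fin 2) ℤ) 1 1)
        ((B : Matrix (Fin 2) (Fin 2) ℤ) 0 0) ((B : Matrix (Fin 2) (Fin 2) ℤ) 0 1)
        ((B : Matrix (Fin 2) (Fin 2) ℤ) 1 0) ((B : Matrix (Fin 2) (Fin 2) ℤ) 1 1)
        hns R1 R2 R3 T1 T2 T3
      apply Units.ext
      rw [Units.val_mul, Units.val_mul]
      ext i j
      fin_cases i <;> fin_cases j <;>
        simp only [Matrix.mul_apply, Fin.sum_univ_two, Fin.zero_eta, Fin.mk_one] <;>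
        linarith [E1, E2, E3]
    -- determinant of any GL2Z element
    have hdetB : ∀ B : GL (Fin 2) ℤ,
        (B : Matrix (Fin 2) (Fin 2) ℤ) 0 0 * (B : Matrix (Fin 2) (Fin 2) ℤ) 1 1
          - (B : Matrix (Fin 2) (Fin 2) ℤ) 0 1 * (B : Matrix (Fin 2) (Fin 2) ℤ) 1 0 = 1 ∨
        (B : Matrix (Fin 2) (Fin 2) ℤ) 0 0 * (B : Matrix (Fin 2) (Fin 2) ℤ) 1 1
          - (B : Matrix (Fin 2) (Fin 2) ℤ) 0 1 * (B : Matrix (Fin 2) (Fin 2) ℤ) 1 0 = -1 := by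
      intro B
      have h1 : IsUnit ((B : Matrix (Fin 2) (Fin 2) ℤ).det) :=
        (Matrix.isUnit_iff_isUnit_det _).mp B.isUnit
      rw [Matrix.det_fin_two] at h1
      exact Int.isUnit_iff.mp h1
    -- entry bounds
    set K : ℤ := 64*(1+a^2)*(1+b^2)^2*(1+c^2)^2*(1+d^2) with hK
    have hK1 : (1:ℤ) ≤ K := K_pos a b c d
    have hKb : ∀ B : GL (Fin 2) ℤ, B ∈ Subgroup.centralizer {M} →
        (((B : Matrix (Fin 2) (Fin 2) ℤ) 0 0)^2 ≤ K ∧ ((B : Matrix (Fin 2) (Fin 2) ℤ) 0 1)^2 ≤ K ∧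
         ((B : Matrix (Fin 2) (Fin 2) ℤ) 1 0)^2 ≤ K ∧ ((B : Matrix (Fin 2) (Fin 2) ℤ) 1 1)^2 ≤ K) := by
      intro B hB
      obtain ⟨R1, R2, R3⟩ := hrel B hB
      set p : ℤ := (B : Matrix (Fin 2) (Fin 2) ℤ) 0 0 with hp
      set q : ℤ := (B : Matrix (Fin 2) (Fin 2) ℤ) 0 1 with hq
      set r : ℤ := (B : Matrix (Fin 2) (Fin 2) ℤ) 1 0 with hr
      set s : ℤ := (B : Matrix (Fin 2) (Fin 2) ℤ) 1 1 with hs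
      have hη : p*s - q*r = 1 ∨ p*s - q*r = -1 := hdetB B
      by_cases hb0 : b = 0
      · by_cases hc0 : c = 0
        · -- diagonal case
          have hadne : a - d ≠ 0 := fun h => hns ⟨hb0, hc0, by linarith⟩
          have hq0 : q = 0 := by
            rcases mul_eq_zero.mp (show q * (a-d) = 0 by
              rw [hb0] at R2; linarith [R2]) with h|h
            · exact h
            · exact absurd h hadne
          have hr0 : r = 0 := by
            rcases mul_eq_zero.mp (show r * (a-d) = 0 by
              rw [hc0] at R3; linarith [R3]) with h|h
            · exact h
            · exact absurd h hadne
          have hps : p*s = 1 ∨ p*s = -1 := by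
            rcases hη with h|h <;> [left; right] <;> rw [hq0] at h <;> linarith
          have hp1 : p^2 = 1 := by
            rcases hps with h|h
            · rcases Int.isUnit_iff.mp (IsUnit.of_mul_eq_one (a := p) s h) with h'|h' <;> rw [h'] <;> norm_num
            · rcases Int.isUnit_iff.mp (IsUnit.of_mul_eq_one (a := p) (-s) (by linarith)) with h'|h' <;>
                rw [h'] <;> norm_num
          have hs1 : s^2 = 1 := by
            rcases hps with h|h
            · rcases Int.isUnit_iff.mp (IsUnit.of_mul_eq_one (a := s) p (by linarith)) with h'|h' <;>
                rw [h'] <;> norm_num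
            · rcases Int.isUnit_iff.mp (IsUnit.of_mul_eq_one (a := s) (-p) (by linarith)) with h'|h' <;>
                rw [h'] <;> norm_num
          refine ⟨by linarith, by rw [hq0]; norm_num; linarith, by rw [hr0]; norm_num; linarith, by linarith⟩
        · -- c ≠ 0
          have hclass' : (a*d - c*b = 1 ∧ (a+d)^2 ≤ 1) ∨ (a*d - c*b = -1 ∧ a+d = 0) := by
            have h0 : a*d - c*b = a*d - b*c := by ring
            rw [h0]; exact hclass
          have hdet' : p*s - r*q = 1 ∨ p*s - r*q = -1 := by
            rcases hη with h|h <;> [left; right] <;> linarith [h]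
          obtain ⟨hbp, hbr, hbq, hbs⟩ := entry_bound a c b d p r q s (p*s - r*q) hc0 hclass'
            hdet' R1.symm R3.symm rfl
          have hKeq : 64*(1+a^2)*(1+c^2)^2*(1+b^2)^2*(1+d^2) = K := by rw [hK]; ring
          rw [hKeq] at hbp hbr hbq hbs
          exact ⟨hbp, hbq, hbr, hbs⟩
      · -- b ≠ 0
        obtain ⟨hbp, hbq, hbr, hbs⟩ := entry_bound a b c d p q r s (p*s - q*r) hb0 hclass
          hη R1 R2 rfl
        rw [← hK] at hbp hbq hbr hbs
        exact ⟨hbp, hbq, hbr, hbs⟩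
    haveI hfin : Finite (Subgroup.centralizer ({M} : Set (GL (Fin 2) ℤ))) :=
      finite_of_bounded _ K hK1 hKb
    right
    refine ⟨⟨habelian, ⟨⊥, inferInstance, inferInstance⟩⟩, ?_⟩
    rintro ⟨h1', -⟩
    exact hscal h1'
end

section
/- Let G be a group with a finite-index characteristic subgroup A isomorphic to ℤ^m (so φ(A) = A for every automorphism φ of G). Suppose there is a group homomorphism sgn : G → {1,−1} (the units of ℤ) such that g⁻¹ x g = x^{sgn g} for all g ∈ G and x ∈ A. Then the set P = {φ ∈ Aut(A) : there exists ψ ∈ Aut(G) with ψ(a) = φ(a) for all a ∈ A} of automorphisms of A that extend to automorphisms of G is a subgroup of Aut(A) of finite index. -/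
section Aux
variable {G : Type*} [Group G] {m : ℕ} {A : Subgroup G}

@[reducible] private def acomm (e : A ≃* Multiplicative (Fin m → ℤ)) : CommGroup ↥A :=
  { (inferInstance : Group ↥A) with
    mul_comm := fun a b => e.injective (by rw [map_mul, map_mul, mul_comm]) }

private lemma pow_injA (e : A ≃* Multiplicative (Fin m → ℤ)) {n : ℕ} (hn : n ≠ 0)
    {a b : ↥A} (h : a ^ n = b ^ n) : a = b := by
  apply e.injective
  have h1 : e a ^ n = e b ^ n := by rw [← map_pow, ← map_pow, h]
  have h2 : n • (e a).toAdd = n • (e b).toAdd := by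
    simpa [toAdd_pow] using congrArg Multiplicative.toAdd h1
  have h3 : (e a).toAdd = (e b).toAdd := by
    funext i
    have := congrFun h2 i
    simp only [Pi.smul_apply, nsmul_eq_mul] at this
    exact mul_left_cancel₀ (by exact_mod_cast hn) this
  exact Multiplicative.toAdd.injective h3


private def red18 (m n : ℕ) : (Fin m → ℤ) →+ (Fin m → ZMod n) where
  toFun v i := (v i : ZMod n)
  map_zero' := by funext i; simp
  map_add' v w := by funext i; push_cast; simp

private lemma red18_eq_iff {m n : ℕ} {a b : Fin m → ℤ} :
    red18 m n a = red18 m n b ↔ ∀ i, (n : ℤ) ∣ (a i - b i) := by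
  constructor
  · intro h i
    have := congrFun h i
    rw [← sub_eq_zero] at this
    have h2 : ((a i - b i : ℤ) : ZMod n) = 0 := by push_cast; simpa [red18] using this
    exact (ZMod.intCast_zmod_eq_zero_iff_dvd _ _).mp h2
  · intro h
    funext i
    have h2 : ((a i - b i : ℤ) : ZMod n) = 0 := (ZMod.intCast_zmod_eq_zero_iff_dvd _ _).mpr (h i)
    push_cast at h2
    simpa [red18, sub_eq_zero] using h2

private lemma finiteT18 (m n : ℕ) [NeZero n] : Finite ((Fin m → ℤ) →+ (Fin m → ZMod n)) := by
  have key : ∀ (t : (Fin m → ℤ) →+ (Fin m → ZMod n)) (v : Fin m → ℤ),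
      t v = ∑ i, v i • t (Pi.single i 1) := by
    intro t v
    have hv : (∑ i, v i • Pi.single i (1 : ℤ)) = v := by
      have : ∀ i, v i • (Pi.single i (1 : ℤ) : Fin m → ℤ) = Pi.single i (v i) := by
        intro i
        rw [← Pi.single_smul, smul_eq_mul, mul_one]
      simp only [this, Finset.univ_sum_single]
    conv_lhs => rw [← hv]
    rw [map_sum]
    simp only [map_zsmul]
  apply Finite.of_injective (fun t : (Fin m → ℤ) →+ (Fin m → ZMod n) =>
    (fun i => t (Pi.single i 1) : Fin m → (Fin m → ZMod n)))
  intro t₁ t₂ h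
  refine DFunLike.ext _ _ fun v => ?_
  rw [key, key]
  refine Finset.sum_congr rfl fun i _ => ?_
  exact congrArg _ (congrFun h i)

private def addF (e : A ≃* Multiplicative (Fin m → ℤ)) (φ : MulAut ↥A) :
    (Fin m → ℤ) →+ (Fin m → ℤ) :=
  AddMonoidHom.mk' (fun v => (e (φ (e.symm (Multiplicative.ofAdd v)))).toAdd)
    (fun v w => by
      rw [show Multiplicative.ofAdd (v + w)
            = Multiplicative.ofAdd v * Multiplicative.ofAdd w from rfl]
      rw [map_mul, map_mul, map_mul]
      rfl)

private lemma addF_apply_toAdd (e : A ≃* Multiplicative (Fin m → ℤ)) (φ : MulAut ↥A)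
    (x : ↥A) : addF e φ (e x).toAdd = (e (φ x)).toAdd := by
  simp [addF, AddMonoidHom.mk'_apply]

private lemma addF_inv_comp (e : A ≃* Multiplicative (Fin m → ℤ)) (φ : MulAut ↥A)
    (v : Fin m → ℤ) : addF e φ⁻¹ (addF e φ v) = v := by
  simp [addF, AddMonoidHom.mk'_apply]

private def Kgrp (e : A ≃* Multiplicative (Fin m → ℤ)) (n : ℕ) : Subgroup (MulAut ↥A) where
  carrier := {φ | ∀ x : ↥A, ∃ y : ↥A, φ x = x * y ^ n}
  one_mem' := fun x => ⟨1, by simp⟩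
  mul_mem' := by
    intro φ₂ φ₁ h₂ h₁ x
    letI := acomm e
    obtain ⟨y₁, hy₁⟩ := h₁ x
    obtain ⟨y₂, hy₂⟩ := h₂ x
    refine ⟨y₂ * φ₂ y₁, ?_⟩
    show φ₂ (φ₁ x) = x * (y₂ * φ₂ y₁) ^ n
    rw [hy₁, map_mul, map_pow, hy₂, mul_pow, mul_assoc]
  inv_mem' := by
    intro φ h x
    obtain ⟨y, hy⟩ := h (φ⁻¹ x)
    have h2 : φ (φ⁻¹ x) = x := by simp
    rw [h2] at hy
    refine ⟨y⁻¹, ?_⟩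
    rw [inv_pow]
    exact eq_mul_inv_of_mul_eq hy.symm

private lemma mem_Kgrp_iff (e : A ≃* Multiplicative (Fin m → ℤ)) {n : ℕ}
    (φ : MulAut ↥A) :
    φ ∈ Kgrp e n ↔ (red18 m n).comp (addF e φ) = red18 m n := by
  constructor
  · intro h
    refine DFunLike.ext _ _ fun v => ?_
    obtain ⟨y, hy⟩ := h (e.symm (Multiplicative.ofAdd v))
    have h1 : addF e φ v = v + n • (e y).toAdd := by
      have := congrArg (fun z : ↥A => (e z).toAdd) hy
      simpa [addF, AddMonoidHom.mk'_apply, toAdd_pow] using this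
    rw [AddMonoidHom.comp_apply, h1]
    refine red18_eq_iff.mpr fun i => ?_
    simp only [Pi.add_apply, Pi.smul_apply, nsmul_eq_mul, add_sub_cancel_left]
    exact ⟨_, rfl⟩
  · intro h x
    have h1 : red18 m n (addF e φ (e x).toAdd) = red18 m n ((e x).toAdd) :=
      congrFun (congrArg DFunLike.coe h) ((e x).toAdd) |>.trans rfl
    have h2 := red18_eq_iff.mp h1
    refine ⟨e.symm (Multiplicative.ofAdd fun i => (addF e φ (e x).toAdd - (e x).toAdd) i / n), ?_⟩
    apply e.injective
    rw [map_mul, map_pow, e.apply_symm_apply]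
    apply Multiplicative.toAdd.injective
    rw [toAdd_mul, toAdd_pow, ← addF_apply_toAdd e φ]
    funext i
    simp only [Pi.add_apply, Pi.smul_apply, nsmul_eq_mul, toAdd_ofAdd,
      Pi.mul_apply, Pi.natCast_apply, Pi.sub_apply]
    have := Int.ediv_mul_cancel (h2 i)
    linarith [this]
end Aux

section Aux2
variable {G : Type*} [Group G] {m : ℕ} {A : Subgroup G}

private lemma addF_mul (e : A ≃* Multiplicative (Fin m → ℤ)) (φ ψ : MulAut ↥A)
    (v : Fin m → ℤ) : addF e (φ * ψ) v = addF e φ (addF e ψ v) := by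
  simp [addF, AddMonoidHom.mk'_apply, MulAut.mul_apply]

private lemma addF_red_congr (e : A ≃* Multiplicative (Fin m → ℤ)) {n : ℕ} (φ : MulAut ↥A)
    {a b : Fin m → ℤ} (h : red18 m n a = red18 m n b) :
    red18 m n (addF e φ a) = red18 m n (addF e φ b) := by
  have h1 := red18_eq_iff.mp h
  refine red18_eq_iff.mpr fun i => ?_
  have hw : a - b = n • (fun i => (a i - b i) / (n : ℤ)) := by
    funext j
    simp only [Pi.sub_apply, Pi.smul_apply, nsmul_eq_mul]
    rw [Int.mul_ediv_cancel' (h1 j)]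
  have h2 : addF e φ a i - addF e φ b i = (addF e φ (a - b)) i := by rw [map_sub]; rfl
  rw [h2, hw, map_nsmul]
  simp only [Pi.smul_apply, nsmul_eq_mul]
  exact ⟨_, rfl⟩

private lemma Kgrp_finiteIndex (e : A ≃* Multiplicative (Fin m → ℤ)) {n : ℕ} (hn : n ≠ 0) :
    (Kgrp e n).FiniteIndex := by
  haveI : NeZero n := ⟨hn⟩
  haveI := finiteT18 m n
  suffices h : Finite (MulAut ↥A ⧸ Kgrp e n) from Subgroup.finiteIndex_of_finite_quotient
  have hresp : ∀ φ ψ : MulAut ↥A, φ⁻¹ * ψ ∈ Kgrp e n →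
      (red18 m n).comp (addF e φ) = (red18 m n).comp (addF e ψ) := by
    intro φ ψ hK
    have hK' := (mem_Kgrp_iff e _).mp hK
    refine DFunLike.ext _ _ fun v => ?_
    have h1 : red18 m n (addF e φ⁻¹ (addF e ψ v)) = red18 m n v := by
      have := congrFun (congrArg DFunLike.coe hK') v
      rwa [AddMonoidHom.comp_apply, addF_mul] at this
    have h2 := addF_red_congr e φ h1
    have h3 : addF e φ (addF e φ⁻¹ (addF e ψ v)) = addF e ψ v := by
      have := addF_inv_comp e φ⁻¹ (addF e ψ v)
      rwa [inv_inv] at this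
    rw [h3] at h2
    simpa using h2.symm
  apply Finite.of_injective
    (fun q : MulAut ↥A ⧸ Kgrp e n =>
      Quotient.liftOn' q (fun φ => (red18 m n).comp (addF e φ))
        (fun φ ψ hrel => hresp φ ψ (QuotientGroup.leftRel_apply.mp hrel)))
  intro q₁ q₂
  refine Quotient.inductionOn₂' q₁ q₂ fun φ ψ h => ?_
  apply Quotient.sound'
  refine QuotientGroup.leftRel_apply.mpr ?_
  refine (mem_Kgrp_iff e _).mpr ?_
  refine DFunLike.ext _ _ fun v => ?_
  simp only [Quotient.liftOn'_mk''] at h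
  have h1 : red18 m n (addF e ψ v) = red18 m n (addF e φ v) := by
    have := congrFun (congrArg DFunLike.coe h) v
    simpa using this.symm
  have h2 := addF_red_congr e φ⁻¹ h1
  rw [addF_inv_comp e φ v] at h2
  rw [AddMonoidHom.comp_apply, addF_mul]
  exact h2

end Aux2

section Aux3
variable {G : Type*} [Group G] {m : ℕ} {A : Subgroup G}

private lemma sgn_triv (e : A ≃* Multiplicative (Fin m → ℤ))
    (sgn : G →* ℤˣ) (hsgn : ∀ g x : G, x ∈ A → g⁻¹ * x * g = x ^ ((sgn g : ℤ))) :
    ∀ a : G, a ∈ A → sgn a = 1 := by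
  intro a ha
  rcases Int.units_eq_one_or (sgn a) with h | h
  · exact h
  · exfalso
    have h1 := hsgn a a ha
    rw [h] at h1
    simp only [inv_mul_cancel, one_mul] at h1
    have hc : ((-1 : ℤˣ) : ℤ) = -1 := rfl
    rw [hc, zpow_neg_one] at h1
    have h2 : (⟨a, ha⟩ : ↥A) * ⟨a, ha⟩ = 1 := by
      ext
      simp only [Subgroup.coe_mul, Subgroup.coe_one]
      nth_rewrite 2 [h1]
      simp
    have h3 : (⟨a, ha⟩ : ↥A) = 1 := by
      have h4 : (⟨a, ha⟩ : ↥A) ^ 2 = 1 ^ 2 := by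
        rw [pow_two, h2, one_pow]
      exact pow_injA e two_ne_zero h4
    have h4 : a = 1 := congrArg Subtype.val h3
    rw [h4, map_one] at h
    exact absurd h.symm (by decide)

private lemma hrmem18 [A.Normal] (q : G ⧸ A) (g : G) :
    Quotient.out q * g * (Quotient.out (q * QuotientGroup.mk g))⁻¹ ∈ A := by
  have h1 : QuotientGroup.mk (s := A) (Quotient.out q * g)
      = QuotientGroup.mk (Quotient.out (q * QuotientGroup.mk g)) := by
    rw [QuotientGroup.out_eq']
    show QuotientGroup.mk (s := A) (Quotient.out q) * QuotientGroup.mk g = q * QuotientGroup.mk g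
    rw [QuotientGroup.out_eq']
  have h2 : (Quotient.out q * g)⁻¹ * Quotient.out (q * QuotientGroup.mk g) ∈ A :=
    QuotientGroup.eq.mp h1
  have h3 := A.inv_mem h2
  have h4 := ‹A.Normal›.conj_mem _ h3 (Quotient.out q * g)
  convert h4 using 1
  group

private noncomputable def rA18 (A : Subgroup G) [A.Normal] (q : G ⧸ A) (g : G) : ↥A :=
  ⟨Quotient.out q * g * (Quotient.out (q * QuotientGroup.mk g))⁻¹, hrmem18 q g⟩

private lemma rA18_cocycle [A.Normal] (q : G ⧸ A) (g h : G) :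
    rA18 A q (g * h) = rA18 A q g * rA18 A (q * QuotientGroup.mk g) h := by
  have h1 : QuotientGroup.mk (s := A) (g * h) = QuotientGroup.mk g * QuotientGroup.mk h := rfl
  apply Subtype.ext
  show Quotient.out q * (g * h) * (Quotient.out (q * QuotientGroup.mk (g * h)))⁻¹
      = (Quotient.out q * g * (Quotient.out (q * QuotientGroup.mk g))⁻¹) *
        (Quotient.out (q * QuotientGroup.mk g) * h *
          (Quotient.out (q * QuotientGroup.mk g * QuotientGroup.mk h))⁻¹)
  rw [h1, ← mul_assoc q]
  group

private lemma rA18_coe [A.Normal]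
    (sgn : G →* ℤˣ) (hsgn : ∀ g x : G, x ∈ A → g⁻¹ * x * g = x ^ ((sgn g : ℤ)))
    (q : G ⧸ A) (x : ↥A) :
    rA18 A q ↑x = x ^ ((sgn (Quotient.out q) : ℤ)) := by
  apply Subtype.ext
  rw [SubgroupClass.coe_zpow]
  show Quotient.out q * ↑x * (Quotient.out (q * QuotientGroup.mk (↑x : G)))⁻¹
      = (↑x : G) ^ ((sgn (Quotient.out q) : ℤ))
  have h1 : QuotientGroup.mk (s := A) (↑x : G) = 1 := (QuotientGroup.eq_one_iff _).mpr x.2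
  rw [h1, mul_one]
  have h2 := hsgn (Quotient.out q)⁻¹ ↑x x.2
  rw [inv_inv] at h2
  rw [h2, map_inv, Int.units_inv_eq_self]

private noncomputable def delta18 (e : A ≃* Multiplicative (Fin m → ℤ)) [A.Normal]
    [Fintype (G ⧸ A)] (root : ↥A →* ↥A) (sgn : G →* ℤˣ) (g : G) : ↥A :=
  letI := acomm e
  ∏ q : G ⧸ A, (root (rA18 A q g)) ^ ((sgn (Quotient.out q * g) : ℤ))

private lemma delta18_mul (e : A ≃* Multiplicative (Fin m → ℤ)) [A.Normal]
    [Fintype (G ⧸ A)] (root : ↥A →* ↥A) (sgn : G →* ℤˣ)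
    (hmk : ∀ g₁ g₂ : G, QuotientGroup.mk (s := A) g₁ = QuotientGroup.mk g₂ → sgn g₁ = sgn g₂)
    (g h : G) :
    delta18 e root sgn (g * h)
      = delta18 e root sgn g ^ ((sgn h : ℤ)) * delta18 e root sgn h := by
  letI := acomm e
  unfold delta18
  have key : ∀ q : G ⧸ A,
      (root (rA18 A q (g * h))) ^ ((sgn (Quotient.out q * (g * h)) : ℤ))
        = ((root (rA18 A q g)) ^ ((sgn (Quotient.out q * g) : ℤ))) ^ ((sgn h : ℤ)) *
          (root (rA18 A (q * QuotientGroup.mk g) h))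
            ^ ((sgn (Quotient.out (q * QuotientGroup.mk g) * h) : ℤ)) := by
    intro q
    have e1 : sgn (Quotient.out q * (g * h)) = sgn (Quotient.out q * g) * sgn h := by
      rw [← mul_assoc, map_mul]
    have e2 : sgn (Quotient.out (q * QuotientGroup.mk g) * h)
        = sgn (Quotient.out q * g) * sgn h := by
      have h3 : QuotientGroup.mk (s := A) (Quotient.out (q * QuotientGroup.mk g) * h)
          = QuotientGroup.mk (Quotient.out q * g * h) := by
        show QuotientGroup.mk (s := A) (Quotient.out (q * QuotientGroup.mk g))
              * QuotientGroup.mk h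
            = QuotientGroup.mk (Quotient.out q * g) * QuotientGroup.mk h
        rw [QuotientGroup.out_eq']
        show q * QuotientGroup.mk g * QuotientGroup.mk h
            = QuotientGroup.mk (s := A) (Quotient.out q) * QuotientGroup.mk g
              * QuotientGroup.mk h
        rw [QuotientGroup.out_eq']
      rw [hmk _ _ h3, map_mul, map_mul]
    rw [rA18_cocycle, map_mul, e1, e2, mul_zpow]
    congr 1
    rw [Units.val_mul, zpow_mul]
  rw [Finset.prod_congr rfl (fun q _ => key q), Finset.prod_mul_distrib]
  congr 1
  · exact (map_prod (zpowGroupHom ((sgn h : ℤ)) : ↥A →* ↥A) _ Finset.univ).symm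
  · exact Equiv.prod_comp (Equiv.mulRight (QuotientGroup.mk g : G ⧸ A))
      (fun p => (root (rA18 A p h)) ^ ((sgn (Quotient.out p * h) : ℤ)))

private lemma delta18_coe (e : A ≃* Multiplicative (Fin m → ℤ)) [A.Normal]
    [Fintype (G ⧸ A)] (root : ↥A →* ↥A) (sgn : G →* ℤˣ)
    (hsgn : ∀ g x : G, x ∈ A → g⁻¹ * x * g = x ^ ((sgn g : ℤ)))
    (hA1 : ∀ a : G, a ∈ A → sgn a = 1) (x : ↥A) :
    delta18 e root sgn ↑x = root x ^ (Fintype.card (G ⧸ A)) := by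
  letI := acomm e
  unfold delta18
  have key : ∀ q : G ⧸ A,
      (root (rA18 A q ↑x)) ^ ((sgn (Quotient.out q * ↑x) : ℤ)) = root x := by
    intro q
    have e1 : sgn (Quotient.out q * ↑x) = sgn (Quotient.out q) := by
      rw [map_mul, hA1 _ x.2, mul_one]
    rw [e1, rA18_coe sgn hsgn, map_zpow, ← zpow_mul, ← Units.val_mul,
      Int.units_mul_self, Units.val_one, zpow_one]
  rw [Finset.prod_congr rfl (fun q _ => key q), Finset.prod_const, Finset.card_univ]
end Aux3

section Aux4
variable {G : Type*} [Group G] {m : ℕ} {A : Subgroup G}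

private lemma K_extends (e : A ≃* Multiplicative (Fin m → ℤ)) [A.FiniteIndex]
    (sgn : G →* ℤˣ) (hsgn : ∀ g x : G, x ∈ A → g⁻¹ * x * g = x ^ ((sgn g : ℤ)))
    (φ : MulAut ↥A) (hφ : φ ∈ Kgrp e A.index) :
    ∃ ψ : MulAut G, ∀ a : ↥A, ψ ↑a = ↑(φ a) := by
  classical
  letI := acomm e
  haveI hnormal : A.Normal := by
    refine ⟨fun x hx g => ?_⟩
    have h1 := hsgn g⁻¹ x hx
    rw [inv_inv] at h1
    rw [h1]
    exact A.zpow_mem hx _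
  have hn : A.index ≠ 0 := Subgroup.FiniteIndex.index_ne_zero
  haveI : Finite (G ⧸ A) := Subgroup.finite_quotient_of_finiteIndex
  haveI : Fintype (G ⧸ A) := Fintype.ofFinite _
  have hcard : Fintype.card (G ⧸ A) = A.index := by
    rw [← Nat.card_eq_fintype_card]; rfl
  have hA1 := sgn_triv e sgn hsgn
  have hmk : ∀ g₁ g₂ : G,
      QuotientGroup.mk (s := A) g₁ = QuotientGroup.mk g₂ → sgn g₁ = sgn g₂ := by
    intro g₁ g₂ h
    have hm : g₁⁻¹ * g₂ ∈ A := QuotientGroup.eq.mp h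
    have h2 : g₂ = g₁ * (g₁⁻¹ * g₂) := by group
    rw [h2, map_mul, hA1 _ hm, mul_one]
  have hφ' : ∀ x : ↥A, ∃ y : ↥A, φ x = x * y ^ A.index := hφ
  choose rootf hroot using hφ'
  have root_hom : ∀ x y : ↥A, rootf (x * y) = rootf x * rootf y := by
    intro x y
    apply pow_injA e hn
    have h1 : (x * y) * rootf (x * y) ^ A.index = (x * y) * (rootf x * rootf y) ^ A.index := by
      rw [← hroot (x * y), map_mul, hroot x, hroot y, mul_pow]
      exact mul_mul_mul_comm x (rootf x ^ A.index) y (rootf y ^ A.index)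
    exact mul_left_cancel h1
  let root : ↥A →* ↥A := MonoidHom.mk' rootf root_hom
  set δ := delta18 e root sgn with hδdef
  have hδmul : ∀ g h : G, δ (g * h) = δ g ^ ((sgn h : ℤ)) * δ h :=
    fun g h => delta18_mul e root sgn hmk g h
  have hδcoe : ∀ x : ↥A, δ ↑x = root x ^ A.index := by
    intro x
    rw [hδdef, delta18_coe e root sgn hsgn hA1 x, hcard]
  let ψ₀ : G →* G := MonoidHom.mk' (fun g => g * ↑(δ g)) (by
    intro g h
    rw [hδmul g h, Subgroup.coe_mul, SubgroupClass.coe_zpow]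
    have hc := hsgn h (↑(δ g)) (δ g).2
    rw [← hc]
    group)
  have hψA : ∀ a : ↥A, ψ₀ ↑a = ↑(φ a) := by
    intro a
    show ↑a * ↑(δ ↑a) = (↑(φ a) : G)
    rw [hδcoe a, hroot a, Subgroup.coe_mul]
    rfl
  have hinj : Function.Injective ψ₀ := by
    refine (injective_iff_map_eq_one ψ₀).mpr fun g hg => ?_
    have hg' : g * ↑(δ g) = 1 := hg
    have hgA : g ∈ A := by
      rw [eq_inv_of_mul_eq_one_left hg']
      exact A.inv_mem (δ g).2
    have h2 : ψ₀ g = ↑(φ ⟨g, hgA⟩) := hψA ⟨g, hgA⟩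
    have h3 : (↑(φ ⟨g, hgA⟩) : G) = 1 := by rw [← h2, hg]
    have h4 : (⟨g, hgA⟩ : ↥A) = 1 := φ.injective (by apply Subtype.ext; rw [map_one]; exact h3)
    exact congrArg Subtype.val h4
  have hsurj : Function.Surjective ψ₀ := by
    intro h
    refine ⟨h * ↑(φ⁻¹ (δ h)⁻¹), ?_⟩
    rw [map_mul, hψA]
    have h5 : φ (φ⁻¹ (δ h)⁻¹) = (δ h)⁻¹ := by simp
    show (h * ↑(δ h)) * ↑(φ (φ⁻¹ (δ h)⁻¹)) = h
    rw [h5]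
    push_cast
    group
  exact ⟨MulEquiv.ofBijective ψ₀ ⟨hinj, hsurj⟩, fun a => hψA a⟩
end Aux4

/-- let `A ≅ ℤ^m` be a finite-index characteristic subgroup of `G` on
which conjugation acts via a sign homomorphism. Then the automorphisms of `A` that
extend to automorphisms of `G` form a finite-index subgroup of `Aut A`. -/
theorem extendable_automorphisms_finite_index {G : Type*} [Group G]
    (m : ℕ) (A : Subgroup G) [A.FiniteIndex]
    (hchar : ∀ φ : MulAut G, Subgroup.map φ.toMonoidHom A = A)
    (e : A ≃* Multiplicative (Fin m → ℤ))
    (sgn : G →* ℤˣ) (hsgn : ∀ g x : G, x ∈ A → g⁻¹ * x * g = x ^ ((sgn g : ℤ))) :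
    ∃ P : Subgroup (MulAut A),
      (∀ φ : MulAut A, φ ∈ P ↔
        ∃ ψ : MulAut G, ∀ a : A, ψ (a : G) = ((φ a : A) : G)) ∧
      P.FiniteIndex := by
  classical
  refine ⟨{ carrier := {φ : MulAut ↥A | ∃ ψ : MulAut G, ∀ a : ↥A, ψ ↑a = ↑(φ a)},
            one_mem' := ⟨1, fun a => by simp⟩,
            mul_mem' := ?_, inv_mem' := ?_ }, fun φ => Iff.rfl, ?_⟩
  · intro φ₂ φ₁ h₂ h₁
    obtain ⟨ψ₂, hψ₂⟩ := h₂
    obtain ⟨ψ₁, hψ₁⟩ := h₁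
    refine ⟨ψ₂ * ψ₁, fun a => ?_⟩
    show ψ₂ (ψ₁ ↑a) = ↑(φ₂ (φ₁ a))
    rw [hψ₁ a, hψ₂ (φ₁ a)]
  · intro φ h
    obtain ⟨ψ, hψ⟩ := h
    refine ⟨ψ⁻¹, fun a => ?_⟩
    have h1 := hψ (φ⁻¹ a)
    have h2 : φ (φ⁻¹ a) = a := by simp
    rw [h2] at h1
    show ψ⁻¹ ↑a = ↑(φ⁻¹ a)
    rw [← h1]
    simp
  · have hn : A.index ≠ 0 := Subgroup.FiniteIndex.index_ne_zero
    haveI := Kgrp_finiteIndex e hn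
    exact Subgroup.finiteIndex_of_le (fun φ hφ => K_extends e sgn hsgn φ hφ)
end
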